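/- (Graded Uniqueness Theorem) Let G be an ample Hausdorff groupoid, R a unital commutative ring, Γ a discrete group with identity ε, and (Σ, G, Γ) a Γ-graded discrete R-twist such that the clopen subgroupoid G_ε = c_G⁻¹(ε) is effective. If Q is a Γ-graded ring and π : A_R(G; Σ) → Q is a graded ring homomorphism, then π is injective if and only if π(r 1̃_K) ≠ 0 for every nonempty compact open subset K of Σ⁽⁰⁾ and every nonzero r ∈ R. -/

import Mathlib

open Set Function TopologicalSpace Classical
noncomputable section

universe u v w

/-- An étale topological groupoid, encoded with total operations:
`mul a b` is only meaningful when `src a = rng b`. -/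
structure EtaleGroupoid (G : Type u) [TopologicalSpace G] where
  mul : G → G → G
  inv : G → G
  src : G → G
  rng : G → G
  rng_mul_self : ∀ g, mul (rng g) g = g
  mul_src_self : ∀ g, mul g (src g) = g
  src_inv : ∀ g, src (inv g) = rng g
  rng_inv : ∀ g, rng (inv g) = src g
  inv_inv : ∀ g, inv (inv g) = g
  inv_mul_self : ∀ g, mul (inv g) g = src g
  mul_inv_self : ∀ g, mul g (inv g) = rng g
  mul_assoc' : ∀ a b c, src a = rng b → src b = rng c →
    mul (mul a b) c = mul a (mul b c)
  src_mul : ∀ a b, src a = rng b → src (mul a b) = src b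
  rng_mul : ∀ a b, src a = rng b → rng (mul a b) = rng a
  continuous_inv : Continuous inv
  continuousOn_mul :
    ContinuousOn (fun p : G × G => mul p.1 p.2) {p : G × G | src p.1 = rng p.2}
  isLocalHomeomorph_src : IsLocalHomeomorph src

namespace EtaleGroupoid

variable {G : Type u} [TopologicalSpace G] (𝒢 : EtaleGroupoid G)

/-- The unit space `G⁽⁰⁾`. -/
def unitSpace : Set G := Set.range 𝒢.src

/-- The isotropy bundle `Iso(G) = {γ : r γ = s γ}`. -/
def iso : Set G := {g | 𝒢.rng g = 𝒢.src g}

/-- The isotropy group `Gᵤᵘ` at a unit `u`. -/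
def isoAt (u : G) : Set G := {g | 𝒢.rng g = u ∧ 𝒢.src g = u}

/-- `U` is a bisection: `src` and `rng` are injective on `U`. -/
def IsBisection (U : Set G) : Prop := Set.InjOn 𝒢.src U ∧ Set.InjOn 𝒢.rng U

/-- `U` is a compact open bisection. -/
def IsCOB (U : Set G) : Prop := IsCompact U ∧ IsOpen U ∧ 𝒢.IsBisection U

/-- Pointwise inverse of a set. -/
def setInv (U : Set G) : Set G := 𝒢.inv '' U

/-- Pointwise product of two sets (only composable products). -/
def setMul (U V : Set G) : Set G :=
  {g | ∃ a ∈ U, ∃ b ∈ V, 𝒢.src a = 𝒢.rng b ∧ g = 𝒢.mul a b}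

/-- `H` is a subgroupoid of `G`. -/
def IsSubgroupoid (H : Set G) : Prop :=
  (∀ a ∈ H, 𝒢.inv a ∈ H) ∧
  (∀ a ∈ H, ∀ b ∈ H, 𝒢.src a = 𝒢.rng b → 𝒢.mul a b ∈ H) ∧
  (∀ a ∈ H, 𝒢.src a ∈ H)

/-- The groupoid is effective: the interior of the isotropy is the unit space. -/
def Effective : Prop := interior 𝒢.iso = 𝒢.unitSpace

/-- A continuous (i.e. locally constant) `Rˣ`-valued 2-cocycle on `G`. -/
def IsCocycle {R : Type w} [CommRing R] (c : G → G → Rˣ) : Prop :=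
  IsLocallyConstant (fun p : {p : G × G // 𝒢.src p.1 = 𝒢.rng p.2} => c p.1.1 p.1.2) ∧
  (∀ a b d, 𝒢.src a = 𝒢.rng b → 𝒢.src b = 𝒢.rng d →
    c a b * c (𝒢.mul a b) d = c b d * c a (𝒢.mul b d)) ∧
  (∀ g, c (𝒢.rng g) g = 1 ∧ c g (𝒢.src g) = 1)

/-- Membership in the (cocycle-twisted) Steinberg algebra `A_R(G)`:
locally constant, compactly supported functions `G → R`. -/
def MemSt {R : Type w} [CommRing R] (f : G → R) : Prop :=
  IsLocallyConstant f ∧ ∃ K : Set G, IsCompact K ∧ Function.support f ⊆ K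

/-- Convolution on `A_R(G;σ)` twisted by a 2-cocycle `c`. -/
noncomputable def convC {R : Type w} [CommRing R] (c : G → G → Rˣ) (f g : G → R) :
    G → R := fun γ =>
  ∑ᶠ p : G × G,
    if 𝒢.src p.1 = 𝒢.rng p.2 ∧ 𝒢.mul p.1 p.2 = γ then
      (c p.1 p.2 : R) * f p.1 * g p.2 else 0

/-- A continuous `Γ`-grading on `G` (for a discrete group `Γ`). -/
def IsGrading {Γ : Type*} [Group Γ] (c : G → Γ) : Prop :=
  IsLocallyConstant c ∧ ∀ a b, 𝒢.src a = 𝒢.rng b → c (𝒢.mul a b) = c a * c b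

end EtaleGroupoid

/-- An ample groupoid: étale with a basis of compact open bisections. -/
structure AmpleGroupoid (G : Type u) [TopologicalSpace G] extends EtaleGroupoid G where
  ample : TopologicalSpace.IsTopologicalBasis {U : Set G | toEtaleGroupoid.IsCOB U}

/-- A discrete twist `G⁽⁰⁾ × Rˣ → Σ → G` over an ample groupoid `G`. -/
structure DiscreteTwist (R : Type w) [CommRing R] {G : Type u} {S : Type v}
    [TopologicalSpace G] [TopologicalSpace S]
    (𝒢 : AmpleGroupoid G) (𝒮 : EtaleGroupoid S) where
  i : G → Rˣ → S
  q : S → G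
  continuousOn_i : ∀ t : Rˣ, ContinuousOn (fun x => i x t) 𝒢.unitSpace
  continuous_q : Continuous q
  i_injOn : Set.InjOn (fun p : G × Rˣ => i p.1 p.2) (𝒢.unitSpace ×ˢ (Set.univ : Set Rˣ))
  q_surj : Function.Surjective q
  exact' : ∀ x ∈ 𝒢.unitSpace, q ⁻¹' {x} = {σ | ∃ t : Rˣ, σ = i x t}
  i_mul : ∀ x ∈ 𝒢.unitSpace, ∀ s t : Rˣ, 𝒮.mul (i x s) (i x t) = i x (s * t)
  unit_eq : 𝒮.unitSpace = (fun x => i x 1) '' 𝒢.unitSpace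
  q_mul : ∀ a b, 𝒮.src a = 𝒮.rng b → q (𝒮.mul a b) = 𝒢.mul (q a) (q b)
  q_inv : ∀ a, q (𝒮.inv a) = 𝒢.inv (q a)
  q_src : ∀ a, q (𝒮.src a) = 𝒢.src (q a)
  q_rng : ∀ a, q (𝒮.rng a) = 𝒢.rng (q a)
  q_unit_bij : Set.BijOn q 𝒮.unitSpace 𝒢.unitSpace
  central : ∀ (σ : S) (t : Rˣ),
    𝒮.mul (i (𝒢.rng (q σ)) t) σ = 𝒮.mul σ (i (𝒢.src (q σ)) t)
  loc_triv : ∀ α : G, ∃ B : Set G, IsOpen B ∧ α ∈ B ∧ 𝒢.IsBisection B ∧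
    ∃ P : G → S, ContinuousOn P B ∧ (∀ β ∈ B, q (P β) = β) ∧
      (∀ t : Rˣ, ContinuousOn (fun β => 𝒮.mul (i (𝒢.rng β) t) (P β)) B) ∧
      (∀ σ : S, q σ ∈ B →
        ∃! p : G × Rˣ, p.1 ∈ B ∧ 𝒮.mul (i (𝒢.rng p.1) p.2) (P p.1) = σ) ∧
      (∀ t : Rˣ, ∀ V ⊆ B, IsOpen V →
        IsOpen ((fun β => 𝒮.mul (i (𝒢.rng β) t) (P β)) '' V))

namespace DiscreteTwist

variable {R : Type w} [CommRing R] {G : Type u} {S : Type v}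
  [TopologicalSpace G] [TopologicalSpace S]
  {𝒢 : AmpleGroupoid G} {𝒮 : EtaleGroupoid S} (T : DiscreteTwist R 𝒢 𝒮)

/-- The action of `Rˣ` on `Σ`: `t • σ = i(r σ, t) σ`. -/
def act (t : Rˣ) (σ : S) : S := 𝒮.mul (T.i (𝒢.rng (T.q σ)) t) σ

/-- The function `1̃_X` associated to a subset `X ⊆ Σ`. -/
noncomputable def tilde (X : Set S) : S → R := fun σ =>
  if h : ∃ t : Rˣ, σ ∈ T.act t '' X then (((Classical.choose h)⁻¹ : Rˣ) : R) else 0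

/-- Membership in the twisted Steinberg algebra `A_R(G;Σ)`: locally constant,
`Rˣ`-contravariant functions with compact image of the support in `G`. -/
def MemA (f : S → R) : Prop :=
  IsLocallyConstant f ∧
  (∀ (t : Rˣ) (σ : S), f (T.act t σ) = ((t⁻¹ : Rˣ) : R) * f σ) ∧
  IsCompact (T.q '' Function.support f)

/-- A (not necessarily continuous) section of `q`. -/
noncomputable def sec : G → S := Function.surjInv T.q_surj

/-- Convolution on `A_R(G;Σ)`, defined via the section `sec`. -/
noncomputable def conv (f g : S → R) : S → R := fun σ =>
  ∑ᶠ α : G,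
    if 𝒢.rng α = 𝒢.rng (T.q σ) then
      f (T.sec α) * g (𝒮.mul (𝒮.inv (T.sec α)) σ) else 0

end DiscreteTwist

end

section AuxLemmas

namespace EtaleGroupoid

variable {G : Type u} [TopologicalSpace G] (𝒢 : EtaleGroupoid G)

lemma rng_rng (g : G) : 𝒢.rng (𝒢.rng g) = 𝒢.rng g := by
  have := 𝒢.rng_mul g (𝒢.inv g) (𝒢.rng_inv g).symm
  rwa [𝒢.mul_inv_self] at this

lemma src_rng (g : G) : 𝒢.src (𝒢.rng g) = 𝒢.rng g := by
  have := 𝒢.src_mul g (𝒢.inv g) (𝒢.rng_inv g).symm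
  rwa [𝒢.mul_inv_self, 𝒢.src_inv] at this

lemma src_src (g : G) : 𝒢.src (𝒢.src g) = 𝒢.src g := by
  rw [← 𝒢.rng_inv g, src_rng]

lemma rng_src (g : G) : 𝒢.rng (𝒢.src g) = 𝒢.src g := by
  rw [← 𝒢.rng_inv g, rng_rng]

lemma src_mem_unitSpace (g : G) : 𝒢.src g ∈ 𝒢.unitSpace := ⟨g, rfl⟩
lemma rng_mem_unitSpace (g : G) : 𝒢.rng g ∈ 𝒢.unitSpace := ⟨𝒢.inv g, 𝒢.src_inv g⟩

lemma unitSpace_eq : 𝒢.unitSpace = {g | 𝒢.src g = g} := by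
  ext g
  constructor
  · rintro ⟨k, rfl⟩; exact 𝒢.src_src k
  · intro h; exact ⟨g, h⟩

lemma src_unit {u : G} (hu : u ∈ 𝒢.unitSpace) : 𝒢.src u = u := by
  rw [unitSpace_eq] at hu; exact hu

lemma rng_unit {u : G} (hu : u ∈ 𝒢.unitSpace) : 𝒢.rng u = u := by
  obtain ⟨k, rfl⟩ := hu; exact 𝒢.rng_src k

lemma inv_unit {u : G} (hu : u ∈ 𝒢.unitSpace) : 𝒢.inv u = u := by
  have h1 : 𝒢.mul u (𝒢.inv u) = u := by rw [𝒢.mul_inv_self, rng_unit 𝒢 hu]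
  have h2 : 𝒢.mul (𝒢.rng (𝒢.inv u)) (𝒢.inv u) = 𝒢.inv u := 𝒢.rng_mul_self _
  rw [𝒢.rng_inv, src_unit 𝒢 hu] at h2
  exact h2.symm.trans h1

lemma mul_inv_mul (a b : G) (h : 𝒢.src a = 𝒢.rng b) :
    𝒢.mul (𝒢.inv a) (𝒢.mul a b) = b := by
  rw [← 𝒢.mul_assoc' _ _ _ (𝒢.src_inv a) h, 𝒢.inv_mul_self, h, 𝒢.rng_mul_self]

lemma mul_mul_inv (a b : G) (h : 𝒢.src a = 𝒢.rng b) :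
    𝒢.mul (𝒢.mul a b) (𝒢.inv b) = a := by
  rw [𝒢.mul_assoc' a b (𝒢.inv b) h (𝒢.rng_inv b).symm, 𝒢.mul_inv_self, ← h, 𝒢.mul_src_self]

lemma mul_inv_mul_self (a b : G) (h : 𝒢.src a = 𝒢.rng (𝒢.inv b)) :
    𝒢.mul (𝒢.mul a (𝒢.inv b)) b = a := by
  have h8 := 𝒢.mul_mul_inv a (𝒢.inv b) h
  rwa [𝒢.inv_inv] at h8

lemma inv_mul (a b : G) (h : 𝒢.src a = 𝒢.rng b) :
    𝒢.inv (𝒢.mul a b) = 𝒢.mul (𝒢.inv b) (𝒢.inv a) := by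
  have hsc : 𝒢.src (𝒢.mul a b) = 𝒢.src b := 𝒢.src_mul a b h
  have hrc : 𝒢.rng (𝒢.mul a b) = 𝒢.rng a := 𝒢.rng_mul a b h
  have h1 : 𝒢.src (𝒢.inv b) = 𝒢.rng (𝒢.inv a) := by rw [𝒢.src_inv, 𝒢.rng_inv, h]
  have h2 : 𝒢.src (𝒢.mul (𝒢.inv b) (𝒢.inv a)) = 𝒢.rng (𝒢.mul a b) := by
    rw [𝒢.src_mul _ _ h1, 𝒢.src_inv, hrc]
  have hd : 𝒢.mul (𝒢.mul (𝒢.inv b) (𝒢.inv a)) (𝒢.mul a b) = 𝒢.src (𝒢.mul a b) := by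
    rw [𝒢.mul_assoc' _ _ _ h1 (by rw [𝒢.src_inv]; exact hrc.symm), mul_inv_mul 𝒢 a b h,
      𝒢.inv_mul_self, hsc]
  calc 𝒢.inv (𝒢.mul a b)
      = 𝒢.mul (𝒢.rng (𝒢.inv (𝒢.mul a b))) (𝒢.inv (𝒢.mul a b)) := (𝒢.rng_mul_self _).symm
    _ = 𝒢.mul (𝒢.src (𝒢.mul a b)) (𝒢.inv (𝒢.mul a b)) := by rw [𝒢.rng_inv]
    _ = 𝒢.mul (𝒢.mul (𝒢.mul (𝒢.inv b) (𝒢.inv a)) (𝒢.mul a b)) (𝒢.inv (𝒢.mul a b)) := by rw [hd]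
    _ = 𝒢.mul (𝒢.mul (𝒢.inv b) (𝒢.inv a)) (𝒢.mul (𝒢.mul a b) (𝒢.inv (𝒢.mul a b))) :=
        𝒢.mul_assoc' _ _ _ h2 (𝒢.rng_inv _).symm
    _ = 𝒢.mul (𝒢.mul (𝒢.inv b) (𝒢.inv a)) (𝒢.rng (𝒢.mul a b)) := by rw [𝒢.mul_inv_self]
    _ = 𝒢.mul (𝒢.inv b) (𝒢.inv a) := by rw [← h2, 𝒢.mul_src_self]

lemma continuous_rng : Continuous 𝒢.rng := by
  have h : Continuous fun g => 𝒢.mul g (𝒢.inv g) :=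
    𝒢.continuousOn_mul.comp_continuous (continuous_id.prodMk 𝒢.continuous_inv)
      (fun g => by simp only [id_eq, Set.mem_setOf_eq, 𝒢.rng_inv])
  simpa only [𝒢.mul_inv_self] using h

lemma continuous_src : Continuous 𝒢.src := by
  simpa only [Function.comp_def, 𝒢.rng_inv] using 𝒢.continuous_rng.comp 𝒢.continuous_inv

lemma isOpen_unitSpace : IsOpen 𝒢.unitSpace :=
  𝒢.isLocalHomeomorph_src.isOpenMap.isOpen_range

lemma isClosed_unitSpace [T2Space G] : IsClosed 𝒢.unitSpace := by
  rw [unitSpace_eq]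
  exact isClosed_eq 𝒢.continuous_src continuous_id

lemma isOpenMap_inv : IsOpenMap 𝒢.inv := by
  intro U hU
  have h : 𝒢.inv '' U = 𝒢.inv ⁻¹' U := by
    ext g
    constructor
    · rintro ⟨a, ha, rfl⟩; simpa [𝒢.inv_inv] using ha
    · intro hg; exact ⟨𝒢.inv g, hg, 𝒢.inv_inv g⟩
  rw [h]
  exact hU.preimage 𝒢.continuous_inv

lemma setMul_eq (U V : Set G) : 𝒢.setMul U V =
    (fun p : G × G => 𝒢.mul p.1 p.2) '' ((U ×ˢ V) ∩ {p | 𝒢.src p.1 = 𝒢.rng p.2}) := by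
  ext g
  constructor
  · rintro ⟨a, ha, b, hb, hc, rfl⟩; exact ⟨(a, b), ⟨⟨ha, hb⟩, hc⟩, rfl⟩
  · rintro ⟨⟨a, b⟩, ⟨⟨ha, hb⟩, hc⟩, rfl⟩; exact ⟨a, ha, b, hb, hc, rfl⟩

lemma isCompact_setMul [T2Space G] {U V : Set G} (hU : IsCompact U) (hV : IsCompact V) :
    IsCompact (𝒢.setMul U V) := by
  rw [setMul_eq]
  exact (((hU.prod hV).inter_right
    (isClosed_eq (𝒢.continuous_src.comp continuous_fst)
      (𝒢.continuous_rng.comp continuous_snd)))).image_of_continuousOn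
    (𝒢.continuousOn_mul.mono inter_subset_right)

end EtaleGroupoid

/-- A helper: locally constant combination of two locally constant maps. -/
lemma locConst_comb {X A B C : Type*} [TopologicalSpace X] {f : X → A} {g : X → B}
    (hf : IsLocallyConstant f) (hg : IsLocallyConstant g) (φ : A → B → C) :
    IsLocallyConstant fun x => φ (f x) (g x) := by
  rw [IsLocallyConstant.iff_exists_open]
  intro x
  obtain ⟨U, hU, hxU, hUf⟩ := hf.exists_open x
  obtain ⟨V, hV, hxV, hVg⟩ := hg.exists_open x
  exact ⟨U ∩ V, hU.inter hV, ⟨hxU, hxV⟩, fun y hy => by rw [hUf y hy.1, hVg y hy.2]⟩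

/-- Continuity of the local inverse of an injective continuous map on a compact set. -/
lemma invFunOn_continuousOn {X : Type*} [TopologicalSpace X] [T2Space X] [Nonempty X]
    {φ : X → X} (hφ : Continuous φ) {B : Set X} (hBc : IsCompact B)
    (hinj : Set.InjOn φ B) : ContinuousOn (Function.invFunOn φ B) (φ '' B) := by
  intro x hx
  intro U hU
  rw [Filter.mem_map, mem_nhdsWithin]
  obtain ⟨U', hsub, hU'o, hmem⟩ := mem_nhds_iff.1 hU
  refine ⟨(φ '' (B \ U'))ᶜ, ?_, ?_, ?_⟩
  · exact (((hBc.diff hU'o).image hφ).isClosed).isOpen_compl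
  · -- x ∉ φ '' (B \ U')
    obtain ⟨b, hbB, rfl⟩ := hx
    rintro ⟨b', ⟨hb'B, hb'U⟩, hb'⟩
    have hbinv : Function.invFunOn φ B (φ b) ∈ B ∧ φ (Function.invFunOn φ B (φ b)) = φ b :=
      ⟨Function.invFunOn_mem ⟨b, hbB, rfl⟩, Function.invFunOn_eq ⟨b, hbB, rfl⟩⟩
    have : b' = Function.invFunOn φ B (φ b) := hinj hb'B hbinv.1 (hb'.trans hbinv.2.symm)
    exact hb'U (this ▸ hmem)
  · rintro y ⟨hyc, ⟨b, hbB, rfl⟩⟩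
    have hinvmem : Function.invFunOn φ B (φ b) ∈ B := Function.invFunOn_mem ⟨b, hbB, rfl⟩
    have hinveq : φ (Function.invFunOn φ B (φ b)) = φ b := Function.invFunOn_eq ⟨b, hbB, rfl⟩
    have : Function.invFunOn φ B (φ b) ∈ U' := by
      by_contra hnot
      exact hyc ⟨Function.invFunOn φ B (φ b), ⟨hinvmem, hnot⟩, hinveq⟩
    exact hsub this

end AuxLemmas

section AuxTwist

namespace DiscreteTwist

variable {R : Type w} [CommRing R] {G : Type u} {S : Type v}
  [TopologicalSpace G] [TopologicalSpace S]
  {𝒢 : AmpleGroupoid G} {𝒮 : EtaleGroupoid S} (T : DiscreteTwist R 𝒢 𝒮)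

lemma act_def (t : Rˣ) (σ : S) : T.act t σ = 𝒮.mul (T.i (𝒢.rng (T.q σ)) t) σ := rfl

lemma q_i {x : G} (hx : x ∈ 𝒢.unitSpace) (t : Rˣ) : T.q (T.i x t) = x := by
  have h : T.i x t ∈ T.q ⁻¹' {x} := by rw [T.exact' x hx]; exact ⟨t, rfl⟩
  simpa using h

lemma i_one_mem {x : G} (hx : x ∈ 𝒢.unitSpace) : T.i x 1 ∈ 𝒮.unitSpace := by
  rw [T.unit_eq]; exact ⟨x, hx, rfl⟩

lemma q_mem_unit {σ : S} (hσ : σ ∈ 𝒮.unitSpace) : T.q σ ∈ 𝒢.unitSpace := by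
  obtain ⟨τ, rfl⟩ := hσ
  rw [T.q_src]
  exact 𝒢.src_mem_unitSpace _

lemma unit_unique {σ τ : S} (hσ : σ ∈ 𝒮.unitSpace) (hτ : τ ∈ 𝒮.unitSpace)
    (h : T.q σ = T.q τ) : σ = τ := T.q_unit_bij.2.1 hσ hτ h

lemma src_eq_i (σ : S) : 𝒮.src σ = T.i (𝒢.src (T.q σ)) 1 := by
  refine unit_unique T (𝒮.src_mem_unitSpace σ) (i_one_mem T (𝒢.src_mem_unitSpace _)) ?_
  rw [T.q_src, q_i T (𝒢.src_mem_unitSpace _)]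

lemma rng_eq_i (σ : S) : 𝒮.rng σ = T.i (𝒢.rng (T.q σ)) 1 := by
  refine unit_unique T (𝒮.rng_mem_unitSpace σ) (i_one_mem T (𝒢.rng_mem_unitSpace _)) ?_
  rw [T.q_rng, q_i T (𝒢.rng_mem_unitSpace _)]

lemma i_one_eq_self {σ : S} (hσ : σ ∈ 𝒮.unitSpace) : T.i (T.q σ) 1 = σ :=
  unit_unique T (i_one_mem T (q_mem_unit T hσ)) hσ (by rw [q_i T (q_mem_unit T hσ)])

lemma src_i {x : G} (hx : x ∈ 𝒢.unitSpace) (t : Rˣ) : 𝒮.src (T.i x t) = T.i x 1 := by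
  rw [src_eq_i T, q_i T hx, 𝒢.src_unit hx]

lemma rng_i {x : G} (hx : x ∈ 𝒢.unitSpace) (t : Rˣ) : 𝒮.rng (T.i x t) = T.i x 1 := by
  rw [rng_eq_i T, q_i T hx, 𝒢.rng_unit hx]

lemma inv_i {x : G} (hx : x ∈ 𝒢.unitSpace) (t : Rˣ) : 𝒮.inv (T.i x t) = T.i x t⁻¹ := by
  have hab : 𝒮.mul (T.i x t) (T.i x t⁻¹) = T.i x 1 := by
    rw [T.i_mul x hx, mul_inv_cancel]
  have h1 : 𝒮.src (T.i x t) = 𝒮.rng (T.i x t⁻¹) := by rw [src_i T hx, rng_i T hx]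
  have h2 := 𝒮.mul_inv_mul (T.i x t) (T.i x t⁻¹) h1
  rw [hab] at h2
  calc 𝒮.inv (T.i x t)
      = 𝒮.mul (𝒮.inv (T.i x t)) (𝒮.src (𝒮.inv (T.i x t))) := (𝒮.mul_src_self _).symm
    _ = 𝒮.mul (𝒮.inv (T.i x t)) (T.i x 1) := by rw [𝒮.src_inv, rng_i T hx]
    _ = T.i x t⁻¹ := h2

lemma q_act (t : Rˣ) (σ : S) : T.q (T.act t σ) = T.q σ := by
  have hx : 𝒢.rng (T.q σ) ∈ 𝒢.unitSpace := 𝒢.rng_mem_unitSpace _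
  have hcomp : 𝒮.src (T.i (𝒢.rng (T.q σ)) t) = 𝒮.rng σ := by
    rw [src_i T hx, rng_eq_i T _]
  rw [act_def T, T.q_mul _ _ hcomp, q_i T hx, 𝒢.rng_mul_self]

lemma act_one (σ : S) : T.act 1 σ = σ := by
  rw [act_def T, ← rng_eq_i T σ, 𝒮.rng_mul_self]

lemma act_act (t s : Rˣ) (σ : S) : T.act t (T.act s σ) = T.act (t * s) σ := by
  have hx : 𝒢.rng (T.q σ) ∈ 𝒢.unitSpace := 𝒢.rng_mem_unitSpace _
  have h1 : 𝒮.src (T.i (𝒢.rng (T.q σ)) t) = 𝒮.rng (T.i (𝒢.rng (T.q σ)) s) := by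
    rw [src_i T hx, rng_i T hx]
  have h2 : 𝒮.src (T.i (𝒢.rng (T.q σ)) s) = 𝒮.rng σ := by
    rw [src_i T hx, rng_eq_i T _]
  rw [act_def T t, q_act T s σ, act_def T s, act_def T (t * s),
    ← 𝒮.mul_assoc' _ _ _ h1 h2, T.i_mul _ hx]

lemma act_i {x : G} (hx : x ∈ 𝒢.unitSpace) (t s : Rˣ) :
    T.act t (T.i x s) = T.i x (t * s) := by
  rw [act_def T, q_i T hx, 𝒢.rng_unit hx, T.i_mul x hx]

lemma orbit {σ τ : S} (h : T.q σ = T.q τ) : ∃ t : Rˣ, σ = T.act t τ := by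
  have hrr : 𝒮.rng σ = 𝒮.rng τ := by rw [rng_eq_i T σ, rng_eq_i T τ, h]
  have hcomp : 𝒮.src (𝒮.inv τ) = 𝒮.rng σ := by rw [𝒮.src_inv, hrr]
  have hunit : 𝒢.src (T.q σ) ∈ 𝒢.unitSpace := 𝒢.src_mem_unitSpace _
  have hqμ : T.q (𝒮.mul (𝒮.inv τ) σ) = 𝒢.src (T.q σ) := by
    rw [T.q_mul _ _ hcomp, T.q_inv, h, 𝒢.inv_mul_self, ← h]
  have hmem : 𝒮.mul (𝒮.inv τ) σ ∈ T.q ⁻¹' {𝒢.src (T.q σ)} := by simp [hqμ]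
  rw [T.exact' _ hunit] at hmem
  obtain ⟨t, ht⟩ := hmem
  refine ⟨t, ?_⟩
  have hστ : σ = 𝒮.mul τ (𝒮.mul (𝒮.inv τ) σ) := by
    rw [← 𝒮.mul_assoc' τ (𝒮.inv τ) σ (𝒮.rng_inv τ).symm hcomp, 𝒮.mul_inv_self, ← hrr,
      𝒮.rng_mul_self]
  rw [act_def T, T.central τ t]
  have hsrceq : 𝒢.src (T.q σ) = 𝒢.src (T.q τ) := by rw [h]
  rw [← hsrceq, ← ht, ← hστ]

lemma inv_act (t : Rˣ) (σ : S) : 𝒮.inv (T.act t σ) = T.act t⁻¹ (𝒮.inv σ) := by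
  have hx : 𝒢.rng (T.q σ) ∈ 𝒢.unitSpace := 𝒢.rng_mem_unitSpace _
  have hcomp : 𝒮.src (T.i (𝒢.rng (T.q σ)) t) = 𝒮.rng σ := by
    rw [src_i T hx, rng_eq_i T _]
  have hr : T.act t⁻¹ (𝒮.inv σ) = 𝒮.mul (𝒮.inv σ) (T.i (𝒢.rng (T.q σ)) t⁻¹) := by
    rw [act_def T, T.central (𝒮.inv σ) t⁻¹, T.q_inv, 𝒢.src_inv]
  rw [hr, act_def T, 𝒮.inv_mul _ _ hcomp, inv_i T hx t]

lemma act_mul_left (t : Rˣ) {a b : S} (h : 𝒮.src a = 𝒮.rng b) :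
    𝒮.mul (T.act t a) b = T.act t (𝒮.mul a b) := by
  have hq : 𝒢.src (T.q a) = 𝒢.rng (T.q b) := by rw [← T.q_src, ← T.q_rng, h]
  have hx : 𝒢.rng (T.q a) ∈ 𝒢.unitSpace := 𝒢.rng_mem_unitSpace _
  have h1 : 𝒮.src (T.i (𝒢.rng (T.q a)) t) = 𝒮.rng a := by rw [src_i T hx, rng_eq_i T _]
  rw [act_def T, 𝒮.mul_assoc' _ a b h1 h, act_def T, T.q_mul a b h, 𝒢.rng_mul _ _ hq]

lemma act_mul_right (t : Rˣ) {a b : S} (h : 𝒮.src a = 𝒮.rng b) :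
    𝒮.mul a (T.act t b) = T.act t (𝒮.mul a b) := by
  have hq : 𝒢.src (T.q a) = 𝒢.rng (T.q b) := by rw [← T.q_src, ← T.q_rng, h]
  have hy : 𝒢.src (T.q b) ∈ 𝒢.unitSpace := 𝒢.src_mem_unitSpace _
  have hcb : T.act t b = 𝒮.mul b (T.i (𝒢.src (T.q b)) t) := by
    rw [act_def T, T.central b t]
  have h2 : 𝒮.src b = 𝒮.rng (T.i (𝒢.src (T.q b)) t) := by rw [rng_i T hy, src_eq_i T _]
  have h3 : T.act t (𝒮.mul a b) =
      𝒮.mul (𝒮.mul a b) (T.i (𝒢.src (T.q (𝒮.mul a b))) t) := by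
    rw [act_def T, T.central]
  rw [hcb, ← 𝒮.mul_assoc' a b _ h h2, h3, T.q_mul a b h, 𝒢.src_mul _ _ hq]

lemma continuous_act (t : Rˣ) : Continuous (T.act t) := by
  have h1 : Continuous fun σ => 𝒢.rng (T.q σ) := 𝒢.continuous_rng.comp T.continuous_q
  have h2 : Continuous fun σ => T.i (𝒢.rng (T.q σ)) t :=
    (T.continuousOn_i t).comp_continuous h1 (fun σ => 𝒢.rng_mem_unitSpace _)
  have h3 : Continuous fun σ => (T.i (𝒢.rng (T.q σ)) t, σ) := h2.prodMk continuous_id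
  exact 𝒮.continuousOn_mul.comp_continuous h3
    (fun σ => by
      show 𝒮.src (T.i (𝒢.rng (T.q σ)) t) = 𝒮.rng σ
      rw [src_i T (𝒢.rng_mem_unitSpace _), rng_eq_i T _])

lemma act_image_eq (t : Rˣ) (U : Set S) : T.act t '' U = T.act t⁻¹ ⁻¹' U := by
  ext σ
  constructor
  · rintro ⟨τ, hτ, rfl⟩
    show T.act t⁻¹ (T.act t τ) ∈ U
    rw [act_act T, inv_mul_cancel, act_one T]; exact hτ
  · intro hσ
    exact ⟨T.act t⁻¹ σ, hσ, by rw [act_act T, mul_inv_cancel, act_one T]⟩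

lemma act_image_open {U : Set S} (hU : IsOpen U) (t : Rˣ) : IsOpen (T.act t '' U) := by
  rw [act_image_eq T]
  exact hU.preimage (continuous_act T t⁻¹)

lemma q_mul_i_rng {β : G} {P : G → S} (h : T.q (P β) = β) (t : Rˣ) :
    T.q (𝒮.mul (T.i (𝒢.rng β) t) (P β)) = β := by
  have hb := 𝒢.rng_mem_unitSpace β
  have hcomp : 𝒮.src (T.i (𝒢.rng β) t) = 𝒮.rng (P β) := by
    rw [src_i T hb, rng_eq_i T _, h]
  rw [T.q_mul _ _ hcomp, q_i T hb, h, 𝒢.rng_mul_self]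

lemma act_eq_phi {β : G} {P : G → S} (h : T.q (P β) = β) (t : Rˣ) :
    T.act t (P β) = 𝒮.mul (T.i (𝒢.rng β) t) (P β) := by
  rw [act_def T, h]

lemma isOpenMap_q : IsOpenMap T.q := by
  intro W hW
  rw [isOpen_iff_forall_mem_open]
  rintro α ⟨σ, hσW, rfl⟩
  obtain ⟨B, hBopen, hαB, hBbis, P, hPcont, hPsec, hPcont2, hPuniq, hPopen⟩ :=
    T.loc_triv (T.q σ)
  obtain ⟨⟨β, t⟩, ⟨hβB, hβeq⟩, -⟩ := hPuniq σ hαB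
  have hβ : β = T.q σ := by
    rw [← q_mul_i_rng T (hPsec β hβB) t, hβeq]
  have hqΨ : ∀ β' ∈ B, T.q (𝒮.mul (T.i (𝒢.rng β') t) (P β')) = β' :=
    fun β' hβ' => q_mul_i_rng T (hPsec β' hβ') t
  have hσΨ : 𝒮.mul (T.i (𝒢.rng (T.q σ)) t) (P (T.q σ)) = σ := by rw [← hβ]; exact hβeq
  have hO : IsOpen (B ∩ (fun β' => 𝒮.mul (T.i (𝒢.rng β') t) (P β')) ⁻¹' W) :=
    (hPcont2 t).isOpen_inter_preimage hBopen hW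
  refine ⟨B ∩ (fun β' => 𝒮.mul (T.i (𝒢.rng β') t) (P β')) ⁻¹' W, ?_, hO, ?_⟩
  · rintro β' ⟨hβ'B, hβ'W⟩
    exact ⟨_, hβ'W, hqΨ β' hβ'B⟩
  · exact ⟨hαB, by show 𝒮.mul _ _ ∈ W; rw [hσΨ]; exact hσW⟩

lemma isClosed_of_preimage {E : Set G} (hE : IsClosed (T.q ⁻¹' E)) : IsClosed E := by
  have h : Eᶜ = T.q '' (T.q ⁻¹' E)ᶜ := by
    ext α
    constructor
    · intro hα
      obtain ⟨σ, rfl⟩ := T.q_surj α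
      exact ⟨σ, hα, rfl⟩
    · rintro ⟨σ, hσ, rfl⟩
      exact hσ
  rw [← isOpen_compl_iff, h]
  exact isOpenMap_q T _ hE.isOpen_compl

end DiscreteTwist

end AuxTwist

section AuxSlice

namespace DiscreteTwist

variable {R : Type w} [CommRing R] {G : Type u} {S : Type v}
  [TopologicalSpace G] [TopologicalSpace S] [T2Space G] [T2Space S]
  {𝒢 : AmpleGroupoid G} {𝒮 : EtaleGroupoid S} (T : DiscreteTwist R 𝒢 𝒮)

/-- A compact open bisection together with a continuous section of `q` over it,
which trivializes the twist. -/
structure GoodSlice (T : DiscreteTwist R 𝒢 𝒮) (B : Set G) (P : G → S) : Prop where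
  compact : IsCompact B
  isOpen : IsOpen B
  injSrc : Set.InjOn 𝒢.src B
  injRng : Set.InjOn 𝒢.rng B
  openImg : IsOpen (P '' B)
  contP : ContinuousOn P B
  qsec : ∀ β ∈ B, T.q (P β) = β
  uniq : ∀ σ : S, T.q σ ∈ B → ∃! p : G × Rˣ, p.1 ∈ B ∧ T.act p.2 (P p.1) = σ

variable {B : Set G} {P : G → S}

lemma tilde_q_mem (hS : GoodSlice T B P) {σ : S} {t : Rˣ}
    (h : σ ∈ T.act t '' (P '' B)) : T.q σ ∈ B := by
  obtain ⟨τ, ⟨β, hβ, rfl⟩, rfl⟩ := h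
  rw [q_act, hS.qsec β hβ]; exact hβ

lemma tilde_val (hS : GoodSlice T B P) {β : G} (hβ : β ∈ B) (t : Rˣ) :
    T.tilde (P '' B) (T.act t (P β)) = ((t⁻¹ : Rˣ) : R) := by
  have hex : ∃ s : Rˣ, T.act t (P β) ∈ T.act s '' (P '' B) :=
    ⟨t, Set.mem_image_of_mem _ (Set.mem_image_of_mem _ hβ)⟩
  simp only [DiscreteTwist.tilde]
  rw [dif_pos hex]
  obtain ⟨τ, hτ, hs⟩ := Classical.choose_spec hex
  obtain ⟨β', hβ', rfl⟩ := hτ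
  have hq : T.q (T.act t (P β)) ∈ B := by rw [q_act, hS.qsec β hβ]; exact hβ
  have he : (β', Classical.choose hex) = (β, t) := (hS.uniq _ hq).unique ⟨hβ', hs⟩ ⟨hβ, rfl⟩
  have ht : Classical.choose hex = t := by simpa using congrArg Prod.snd he
  rw [ht]

lemma tilde_zero (hS : GoodSlice T B P) {σ : S} (h : T.q σ ∉ B) :
    T.tilde (P '' B) σ = 0 := by
  simp only [DiscreteTwist.tilde]
  rw [dif_neg]
  rintro ⟨s, hmem⟩
  exact h (tilde_q_mem T hS hmem)

lemma tilde_supp (hS : GoodSlice T B P) {σ : S} (h : T.tilde (P '' B) σ ≠ 0) :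
    T.q σ ∈ B :=
  by_contra fun hn => h (tilde_zero T hS hn)

lemma tilde_equivariant (hS : GoodSlice T B P) (t : Rˣ) (σ : S) :
    T.tilde (P '' B) (T.act t σ) = ((t⁻¹ : Rˣ) : R) * T.tilde (P '' B) σ := by
  by_cases hq : T.q σ ∈ B
  · obtain ⟨⟨β, s⟩, ⟨hβ, heq⟩, -⟩ := hS.uniq σ hq
    rw [← heq, act_act T, tilde_val T hS hβ, tilde_val T hS hβ, mul_inv_rev,
      Units.val_mul, mul_comm]
  · rw [tilde_zero T hS hq, tilde_zero T hS (by rw [q_act T t σ]; exact hq), mul_zero]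

lemma supp_eq_preimage {f : S → R}
    (hequiv : ∀ (t : Rˣ) (σ : S), f (T.act t σ) = ((t⁻¹ : Rˣ) : R) * f σ) :
    Function.support f = T.q ⁻¹' (T.q '' Function.support f) := by
  apply Set.Subset.antisymm (Set.subset_preimage_image _ _)
  intro σ hσ
  obtain ⟨τ, hτ, hqτ⟩ := hσ
  obtain ⟨t, rfl⟩ := orbit T (hqτ.symm : T.q σ = T.q τ)
  show f (T.act t τ) ≠ 0
  rw [hequiv t τ]
  simp only [ne_eq, Units.mul_right_eq_zero]
  exact hτ

lemma isClosed_q_supp {f : S → R} (hlc : IsLocallyConstant f)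
    (hequiv : ∀ (t : Rˣ) (σ : S), f (T.act t σ) = ((t⁻¹ : Rˣ) : R) * f σ) :
    IsClosed (T.q '' Function.support f) := by
  apply isClosed_of_preimage T
  rw [← supp_eq_preimage T hequiv]
  have h : Function.support f = {σ | f σ = 0}ᶜ := rfl
  rw [h]
  exact (hlc.isOpen_fiber 0).isClosed_compl

lemma memA_of {f : S → R} (hlc : IsLocallyConstant f)
    (hequiv : ∀ (t : Rˣ) (σ : S), f (T.act t σ) = ((t⁻¹ : Rˣ) : R) * f σ)
    {Kc : Set G} (hKc : IsCompact Kc) (hsub : T.q '' Function.support f ⊆ Kc) :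
    T.MemA f :=
  ⟨hlc, hequiv, hKc.of_isClosed_subset (isClosed_q_supp T hlc hequiv) hsub⟩

lemma tilde_memA (hS : GoodSlice T B P) : T.MemA (T.tilde (P '' B)) := by
  refine memA_of T ?_ (tilde_equivariant T hS) hS.compact ?_
  · rw [IsLocallyConstant.iff_exists_open]
    intro σ
    by_cases hq : T.q σ ∈ B
    · obtain ⟨⟨β, s⟩, ⟨hβ, heq⟩, -⟩ := hS.uniq σ hq
      refine ⟨T.act s '' (P '' B), act_image_open T hS.openImg s, ⟨P β, ⟨β, hβ, rfl⟩, heq⟩, ?_⟩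
      rintro σ' ⟨τ', ⟨β', hβ', rfl⟩, rfl⟩
      rw [tilde_val T hS hβ', ← heq, tilde_val T hS hβ]
    · refine ⟨T.q ⁻¹' Bᶜ, (hS.compact.isClosed.isOpen_compl).preimage T.continuous_q, hq, ?_⟩
      intro σ' hσ'
      rw [tilde_zero T hS hσ', tilde_zero T hS hq]
  · rintro α ⟨σ, hσ, rfl⟩
    exact tilde_supp T hS hσ

lemma GoodSlice.inv (hS : GoodSlice T B P) :
    GoodSlice T (𝒢.inv '' B) (fun β => 𝒮.inv (P (𝒢.inv β))) := by
  refine ⟨hS.compact.image 𝒢.continuous_inv, 𝒢.isOpenMap_inv _ hS.isOpen, ?_, ?_, ?_, ?_, ?_, ?_⟩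
  · rintro _ ⟨a, ha, rfl⟩ _ ⟨b, hb, rfl⟩ h
    rw [𝒢.src_inv, 𝒢.src_inv] at h
    rw [hS.injRng ha hb h]
  · rintro _ ⟨a, ha, rfl⟩ _ ⟨b, hb, rfl⟩ h
    rw [𝒢.rng_inv, 𝒢.rng_inv] at h
    rw [hS.injSrc ha hb h]
  · have himg : (fun β => 𝒮.inv (P (𝒢.inv β))) '' (𝒢.inv '' B) = 𝒮.inv '' (P '' B) := by
      ext σ
      constructor
      · rintro ⟨_, ⟨b, hb, rfl⟩, rfl⟩
        exact ⟨P b, ⟨b, hb, rfl⟩, by simp only [𝒢.inv_inv]⟩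
      · rintro ⟨_, ⟨b, hb, rfl⟩, rfl⟩
        exact ⟨𝒢.inv b, ⟨b, hb, rfl⟩, by simp only [𝒢.inv_inv]⟩
    rw [himg]
    exact 𝒮.isOpenMap_inv _ hS.openImg
  · refine 𝒮.continuous_inv.comp_continuousOn (hS.contP.comp 𝒢.continuous_inv.continuousOn ?_)
    rintro _ ⟨b, hb, rfl⟩
    show 𝒢.inv (𝒢.inv b) ∈ B
    rw [𝒢.inv_inv]; exact hb
  · rintro _ ⟨b, hb, rfl⟩
    show T.q (𝒮.inv (P (𝒢.inv (𝒢.inv b)))) = 𝒢.inv b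
    rw [𝒢.inv_inv, T.q_inv, hS.qsec b hb]
  · intro σ hqσ
    have hq' : T.q (𝒮.inv σ) ∈ B := by
      obtain ⟨b, hb, hbe⟩ := hqσ
      rw [T.q_inv, ← hbe, 𝒢.inv_inv]; exact hb
    obtain ⟨⟨β, t⟩, ⟨hβ, heq⟩, huniq⟩ := hS.uniq (𝒮.inv σ) hq'
    refine ⟨(𝒢.inv β, t⁻¹), ⟨⟨β, hβ, rfl⟩, ?_⟩, ?_⟩
    · show T.act t⁻¹ (𝒮.inv (P (𝒢.inv (𝒢.inv β)))) = σ
      rw [𝒢.inv_inv, ← inv_act T t (P β), heq, 𝒮.inv_inv]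
    · rintro ⟨β', t'⟩ ⟨⟨b', hb', rfl⟩, heq'⟩
      have heq'' : T.act t' (𝒮.inv (P b')) = σ := by
        have hh : T.act t' (𝒮.inv (P (𝒢.inv (𝒢.inv b')))) = σ := heq'
        rwa [𝒢.inv_inv] at hh
      have hinvσ : 𝒮.inv σ = T.act t'⁻¹ (P b') := by
        rw [← heq'', inv_act T t' _, 𝒮.inv_inv]
      have hpair := huniq (b', t'⁻¹) ⟨hb', hinvσ.symm⟩
      have hb : b' = β := by simpa using congrArg Prod.fst hpair
      have ht : t'⁻¹ = t := by simpa using congrArg Prod.snd hpair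
      rw [Prod.ext_iff]
      constructor
      · simpa using congrArg 𝒢.inv hb
      · show t' = t⁻¹
        rw [← ht, inv_inv]

lemma i_one_image_eq {K : Set G} (hK : K ⊆ 𝒢.unitSpace) :
    (fun x => T.i x 1) '' K = T.q ⁻¹' K ∩ 𝒮.unitSpace := by
  ext σ
  constructor
  · rintro ⟨x, hx, rfl⟩
    refine ⟨?_, i_one_mem T (hK hx)⟩
    rw [Set.mem_preimage, q_i T (hK hx)]; exact hx
  · rintro ⟨hq, hunit⟩
    exact ⟨T.q σ, hq, i_one_eq_self T hunit⟩

lemma goodSlice_units {K : Set G} (hK : K ⊆ 𝒢.unitSpace) (hKc : IsCompact K)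
    (hKo : IsOpen K) : GoodSlice T K (fun x => T.i x 1) := by
  refine ⟨hKc, hKo, ?_, ?_, ?_, (T.continuousOn_i 1).mono hK, fun β hβ => q_i T (hK hβ) 1, ?_⟩
  · intro a ha b hb h; rwa [𝒢.src_unit (hK ha), 𝒢.src_unit (hK hb)] at h
  · intro a ha b hb h; rwa [𝒢.rng_unit (hK ha), 𝒢.rng_unit (hK hb)] at h
  · rw [i_one_image_eq T hK]
    exact (hKo.preimage T.continuous_q).inter 𝒮.isOpen_unitSpace
  · intro σ hq
    have hx := hK hq
    have hmem : σ ∈ T.q ⁻¹' {T.q σ} := rfl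
    rw [T.exact' _ hx] at hmem
    obtain ⟨t, ht⟩ := hmem
    refine ⟨(T.q σ, t), ⟨hq, ?_⟩, ?_⟩
    · show T.act t (T.i (T.q σ) 1) = σ
      rw [act_i T hx, mul_one, ← ht]
    · rintro ⟨β', t'⟩ ⟨hβ', heq'⟩
      show (β', t') = (T.q σ, t)
      have heq'' : T.i β' t' = σ := by
        rw [← heq']
        show T.i β' t' = T.act t' (T.i β' 1)
        rw [act_i T (hK hβ'), mul_one]
      exact T.i_injOn (Set.mk_mem_prod (hK hβ') (Set.mem_univ _))
        (Set.mk_mem_prod hx (Set.mem_univ _))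
        (show T.i β' t' = T.i (T.q σ) t by rw [heq'']; exact ht)

lemma exists_goodSlice (α : G) {O : Set G} (hO : IsOpen O) (hα : α ∈ O) :
    ∃ B P, GoodSlice T B P ∧ α ∈ B ∧ B ⊆ O := by
  obtain ⟨B₀, hB₀open, hαB₀, hB₀bis, P, hPcont, hPsec, hPcont2, hPuniq, hPopen⟩ :=
    T.loc_triv α
  obtain ⟨B', hBcob, hαB, hBsub⟩ :=
    𝒢.ample.exists_subset_of_mem_open (⟨hαB₀, hα⟩ : α ∈ B₀ ∩ O) (hB₀open.inter hO)
  have hBB₀ : B' ⊆ B₀ := fun b hb => (hBsub hb).1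
  refine ⟨B', P, ⟨hBcob.1, hBcob.2.1, hBcob.2.2.1, hBcob.2.2.2, ?_,
    hPcont.mono hBB₀, fun β hβ => hPsec β (hBB₀ hβ), ?_⟩, hαB, fun b hb => (hBsub hb).2⟩
  · have h1 := hPopen 1 B' hBB₀ hBcob.2.1
    have himg : (fun β => 𝒮.mul (T.i (𝒢.rng β) 1) (P β)) '' B' = P '' B' := by
      apply Set.image_congr
      intro β hβ
      rw [← act_eq_phi T (hPsec β (hBB₀ hβ)) 1, act_one T]
    rwa [himg] at h1
  · intro σ hqσ
    obtain ⟨⟨β, t⟩, ⟨hβ, heq⟩, huniq⟩ := hPuniq σ (hBB₀ hqσ)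
    have hβval : β = T.q σ := by rw [← q_mul_i_rng T (hPsec β hβ) t, heq]
    refine ⟨(β, t), ⟨hβval ▸ hqσ, ?_⟩, ?_⟩
    · show T.act t (P β) = σ
      rw [act_eq_phi T (hPsec β hβ) t]; exact heq
    · rintro ⟨β', t'⟩ ⟨hβ', heq'⟩
      exact huniq (β', t') ⟨hBB₀ hβ',
        by rw [← act_eq_phi T (hPsec β' (hBB₀ hβ')) t']; exact heq'⟩

end DiscreteTwist

end AuxSlice

section AuxConv

namespace DiscreteTwist

variable {R : Type w} [CommRing R] {G : Type u} {S : Type v}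
  [TopologicalSpace G] [TopologicalSpace S] [T2Space G] [T2Space S]
  {𝒢 : AmpleGroupoid G} {𝒮 : EtaleGroupoid S} (T : DiscreteTwist R 𝒢 𝒮)

variable {B : Set G} {P : G → S}

lemma q_sec (α : G) : T.q (T.sec α) = α := Function.surjInv_eq T.q_surj α

lemma conv_left_eq (hS : GoodSlice T B P) {g : S → R}
    (hg : ∀ (t : Rˣ) (σ : S), g (T.act t σ) = ((t⁻¹ : Rˣ) : R) * g σ) (σ : S)
    {β : G} (hβ : β ∈ B) (hrng : 𝒢.rng β = 𝒢.rng (T.q σ)) :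
    T.conv (T.tilde (P '' B)) g σ = g (𝒮.mul (𝒮.inv (P β)) σ) := by
  have hone : ∀ α : G, α ≠ β →
      (if 𝒢.rng α = 𝒢.rng (T.q σ) then
        T.tilde (P '' B) (T.sec α) * g (𝒮.mul (𝒮.inv (T.sec α)) σ) else 0) = 0 := by
    intro α hα
    by_cases hc : 𝒢.rng α = 𝒢.rng (T.q σ)
    · rw [if_pos hc]
      have htz : T.tilde (P '' B) (T.sec α) = 0 := by
        by_contra hnz
        have hm := tilde_supp T hS hnz
        rw [q_sec] at hm
        exact hα (hS.injRng hm hβ (hc.trans hrng.symm))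
      rw [htz, zero_mul]
    · rw [if_neg hc]
  simp only [DiscreteTwist.conv]
  rw [finsum_eq_single _ β hone, if_pos hrng]
  obtain ⟨u, hu⟩ := orbit T ((q_sec T β).trans (hS.qsec β hβ).symm)
  have hcomp : 𝒮.src (𝒮.inv (P β)) = 𝒮.rng σ := by
    rw [𝒮.src_inv, rng_eq_i T (P β), hS.qsec β hβ, hrng, ← rng_eq_i T σ]
  rw [hu, tilde_val T hS hβ, inv_act T u (P β), act_mul_left T u⁻¹ hcomp, hg u⁻¹ _,
    inv_inv, ← mul_assoc, Units.inv_mul, one_mul]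

lemma conv_left_zero (hS : GoodSlice T B P) (g : S → R) (σ : S)
    (h : ∀ β' ∈ B, 𝒢.rng β' ≠ 𝒢.rng (T.q σ)) :
    T.conv (T.tilde (P '' B)) g σ = 0 := by
  simp only [DiscreteTwist.conv]
  apply finsum_eq_zero_of_forall_eq_zero
  intro α
  by_cases hc : 𝒢.rng α = 𝒢.rng (T.q σ)
  · rw [if_pos hc]
    have htz : T.tilde (P '' B) (T.sec α) = 0 := by
      by_contra hnz
      have hm := tilde_supp T hS hnz
      rw [q_sec] at hm
      exact h α hm hc
    rw [htz, zero_mul]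
  · rw [if_neg hc]

lemma conv_right_eq (hS : GoodSlice T B P) {f : S → R}
    (hf : ∀ (t : Rˣ) (σ : S), f (T.act t σ) = ((t⁻¹ : Rˣ) : R) * f σ) (σ : S)
    {β : G} (hβ : β ∈ B) (hsrc : 𝒢.src β = 𝒢.src (T.q σ)) :
    T.conv f (T.tilde (P '' B)) σ = f (𝒮.mul σ (𝒮.inv (P β))) := by
  have hco : 𝒢.src (T.q σ) = 𝒢.rng (𝒢.inv β) := by rw [𝒢.rng_inv, hsrc]
  have hrngα₀ : 𝒢.rng (𝒢.mul (T.q σ) (𝒢.inv β)) = 𝒢.rng (T.q σ) := 𝒢.rng_mul _ _ hco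
  have hcompσ : 𝒮.src σ = 𝒮.rng (𝒮.inv (P β)) := by
    rw [𝒮.rng_inv, src_eq_i T σ, src_eq_i T (P β), hS.qsec β hβ, hsrc]
  have hqτ₀ : T.q (𝒮.mul σ (𝒮.inv (P β))) = 𝒢.mul (T.q σ) (𝒢.inv β) := by
    rw [T.q_mul _ _ hcompσ, T.q_inv, hS.qsec β hβ]
  have hone : ∀ α : G, α ≠ 𝒢.mul (T.q σ) (𝒢.inv β) →
      (if 𝒢.rng α = 𝒢.rng (T.q σ) then
        f (T.sec α) * T.tilde (P '' B) (𝒮.mul (𝒮.inv (T.sec α)) σ) else 0) = 0 := by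
    intro α hα
    by_cases hc : 𝒢.rng α = 𝒢.rng (T.q σ)
    · rw [if_pos hc]
      have hcomp1 : 𝒮.src (𝒮.inv (T.sec α)) = 𝒮.rng σ := by
        rw [𝒮.src_inv, rng_eq_i T (T.sec α), q_sec, hc, ← rng_eq_i T σ]
      have htz : T.tilde (P '' B) (𝒮.mul (𝒮.inv (T.sec α)) σ) = 0 := by
        by_contra hnz
        have hm := tilde_supp T hS hnz
        rw [T.q_mul _ _ hcomp1, T.q_inv, q_sec] at hm
        have hcoα : 𝒢.src (𝒢.inv α) = 𝒢.rng (T.q σ) := by rw [𝒢.src_inv, hc]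
        have hsrcm : 𝒢.src (𝒢.mul (𝒢.inv α) (T.q σ)) = 𝒢.src (T.q σ) :=
          𝒢.src_mul _ _ hcoα
        have hβeq : 𝒢.mul (𝒢.inv α) (T.q σ) = β :=
          hS.injSrc hm hβ (hsrcm.trans hsrc.symm)
        apply hα
        have h5 : 𝒢.mul α (𝒢.mul (𝒢.inv α) (T.q σ)) = T.q σ := by
          have h5' := 𝒢.mul_inv_mul (𝒢.inv α) (T.q σ) hcoα
          rwa [𝒢.inv_inv] at h5'
        have h6 : 𝒢.mul α β = T.q σ := by rw [← hβeq]; exact h5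
        have h7 : 𝒢.src α = 𝒢.rng β := by
          rw [← hβeq, 𝒢.rng_mul _ _ hcoα, 𝒢.rng_inv]
        rw [← h6, 𝒢.mul_mul_inv α β h7]
      rw [htz, mul_zero]
    · rw [if_neg hc]
  simp only [DiscreteTwist.conv]
  rw [finsum_eq_single _ (𝒢.mul (T.q σ) (𝒢.inv β)) hone, if_pos hrngα₀]
  obtain ⟨u, hu⟩ := orbit T ((q_sec T _).trans hqτ₀.symm)
  have hcomp2 : 𝒮.src (𝒮.inv (𝒮.mul σ (𝒮.inv (P β)))) = 𝒮.rng σ := by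
    rw [𝒮.src_inv, 𝒮.rng_mul _ _ hcompσ]
  have hmulPβ : 𝒮.mul (𝒮.inv (𝒮.mul σ (𝒮.inv (P β)))) σ = P β := by
    rw [𝒮.inv_mul _ _ hcompσ, 𝒮.inv_inv]
    have hcomp3 : 𝒮.src (P β) = 𝒮.rng (𝒮.inv σ) := by
      rw [𝒮.rng_inv, src_eq_i T (P β), hS.qsec β hβ, hsrc, ← src_eq_i T σ]
    rw [𝒮.mul_assoc' _ _ _ hcomp3 (𝒮.src_inv σ), 𝒮.inv_mul_self]
    have hss : 𝒮.src σ = 𝒮.src (P β) := by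
      rw [src_eq_i T σ, src_eq_i T (P β), hS.qsec β hβ, hsrc]
    rw [hss, 𝒮.mul_src_self]
  rw [hu, hf u _, inv_act T u _, act_mul_left T u⁻¹ hcomp2, hmulPβ, tilde_val T hS hβ,
    inv_inv, mul_comm ((u⁻¹ : Rˣ) : R) (f _), mul_assoc, Units.inv_mul, mul_one]

lemma conv_right_zero (hS : GoodSlice T B P) (f : S → R) (σ : S)
    (h : ∀ β' ∈ B, 𝒢.src β' ≠ 𝒢.src (T.q σ)) :
    T.conv f (T.tilde (P '' B)) σ = 0 := by
  simp only [DiscreteTwist.conv]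
  apply finsum_eq_zero_of_forall_eq_zero
  intro α
  by_cases hc : 𝒢.rng α = 𝒢.rng (T.q σ)
  · rw [if_pos hc]
    have hcomp1 : 𝒮.src (𝒮.inv (T.sec α)) = 𝒮.rng σ := by
      rw [𝒮.src_inv, rng_eq_i T (T.sec α), q_sec, hc, ← rng_eq_i T σ]
    have htz : T.tilde (P '' B) (𝒮.mul (𝒮.inv (T.sec α)) σ) = 0 := by
      by_contra hnz
      have hm := tilde_supp T hS hnz
      rw [T.q_mul _ _ hcomp1, T.q_inv, q_sec] at hm
      have hcoα : 𝒢.src (𝒢.inv α) = 𝒢.rng (T.q σ) := by rw [𝒢.src_inv, hc]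
      exact h _ hm (𝒢.src_mul _ _ hcoα)
    rw [htz, mul_zero]
  · rw [if_neg hc]

lemma conv_equivariant {f g : S → R}
    (hg : ∀ (t : Rˣ) (σ : S), g (T.act t σ) = ((t⁻¹ : Rˣ) : R) * g σ) (t : Rˣ) (σ : S) :
    T.conv f g (T.act t σ) = ((t⁻¹ : Rˣ) : R) * T.conv f g σ := by
  simp only [DiscreteTwist.conv, q_act]
  have hterm : ∀ α : G,
      (if 𝒢.rng α = 𝒢.rng (T.q σ) then
        f (T.sec α) * g (𝒮.mul (𝒮.inv (T.sec α)) (T.act t σ)) else 0)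
      = ((t⁻¹ : Rˣ) : R) * (if 𝒢.rng α = 𝒢.rng (T.q σ) then
        f (T.sec α) * g (𝒮.mul (𝒮.inv (T.sec α)) σ) else 0) := by
    intro α
    by_cases hc : 𝒢.rng α = 𝒢.rng (T.q σ)
    · rw [if_pos hc, if_pos hc]
      have hcomp1 : 𝒮.src (𝒮.inv (T.sec α)) = 𝒮.rng σ := by
        rw [𝒮.src_inv, rng_eq_i T (T.sec α), q_sec, hc, ← rng_eq_i T σ]
      rw [act_mul_right T t hcomp1, hg t, mul_left_comm]
    · rw [if_neg hc, if_neg hc, mul_zero]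
  rw [finsum_congr hterm]
  by_cases hfin : (Function.support fun α : G =>
      (if 𝒢.rng α = 𝒢.rng (T.q σ) then
        f (T.sec α) * g (𝒮.mul (𝒮.inv (T.sec α)) σ) else 0)).Finite
  · exact (mul_finsum' _ _ hfin).symm
  · have hsupp : (Function.support fun α : G => ((t⁻¹ : Rˣ) : R) *
        (if 𝒢.rng α = 𝒢.rng (T.q σ) then
          f (T.sec α) * g (𝒮.mul (𝒮.inv (T.sec α)) σ) else 0))
        = (Function.support fun α : G =>
        (if 𝒢.rng α = 𝒢.rng (T.q σ) then
          f (T.sec α) * g (𝒮.mul (𝒮.inv (T.sec α)) σ) else 0)) := by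
      ext α
      simp only [Function.mem_support, ne_eq, Units.mul_right_eq_zero]
    rw [finsum_of_infinite_support (by rw [hsupp]; exact hfin),
      finsum_of_infinite_support hfin, mul_zero]

lemma memA_zero : T.MemA (0 : S → R) := by
  refine ⟨IsLocallyConstant.const 0, fun t σ => by simp, ?_⟩
  have hs : Function.support (0 : S → R) = ∅ := by ext σ; simp
  rw [hs, Set.image_empty]
  exact isCompact_empty

lemma memA_neg {f : S → R} (hf : T.MemA f) : T.MemA (-f) := by
  obtain ⟨hlc, heq, hcp⟩ := hf
  refine ⟨locConst_comb hlc hlc (fun a _ => -a), fun t σ => by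
    show -f (T.act t σ) = _ * (-f) σ
    rw [heq t σ]
    simp [mul_neg], ?_⟩
  have hs : Function.support (-f) = Function.support f := by ext σ; simp
  rw [hs]
  exact hcp

lemma memA_add {f g : S → R} (hf : T.MemA f) (hg : T.MemA g) : T.MemA (f + g) := by
  obtain ⟨hflc, hfe, hfc⟩ := hf
  obtain ⟨hglc, hge, hgc⟩ := hg
  have happ : (f + g) = fun σ => f σ + g σ := rfl
  rw [happ]
  refine memA_of T (locConst_comb hflc hglc (· + ·))
    (fun t σ => by rw [hfe t σ, hge t σ, mul_add]) (hfc.union hgc) ?_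
  rintro α ⟨σ, hσ, rfl⟩
  rcases Classical.em (f σ = 0) with h0 | h0
  · right
    refine ⟨σ, ?_, rfl⟩
    intro hg0
    exact hσ (by show f σ + g σ = 0; rw [h0, hg0, add_zero])
  · exact Or.inl ⟨σ, h0, rfl⟩

lemma memA_smul (r : R) {f : S → R} (hf : T.MemA f) : T.MemA (fun σ => r * f σ) := by
  obtain ⟨hlc, he, hc⟩ := hf
  refine memA_of T (locConst_comb hlc hlc (fun a _ => r * a))
    (fun t σ => by rw [he t σ, mul_left_comm]) hc ?_
  rintro α ⟨σ, hσ, rfl⟩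
  exact ⟨σ, fun h0 => hσ (by show r * f σ = 0; rw [h0, mul_zero]), rfl⟩

lemma memA_finsetSum {ι : Type*} (s : Finset ι) (F : ι → S → R)
    (h : ∀ i ∈ s, T.MemA (F i)) : T.MemA (fun σ => ∑ i ∈ s, F i σ) := by
  classical
  induction s using Finset.induction_on with
  | empty =>
    have hz : (fun σ => ∑ i ∈ (∅ : Finset ι), F i σ) = (0 : S → R) := by
      funext σ; simp
    rw [hz]
    exact memA_zero T
  | @insert a s ha ih =>
    have hins : (fun σ => ∑ i ∈ insert a s, F i σ)
        = F a + fun σ => ∑ i ∈ s, F i σ := by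
      funext σ; rw [Finset.sum_insert ha]; rfl
    rw [hins]
    exact memA_add T (h a (Finset.mem_insert_self a s))
      (ih fun i hi => h i (Finset.mem_insert_of_mem hi))

lemma memA_conv_right (hS : GoodSlice T B P) {f : S → R} (hf : T.MemA f) :
    T.MemA (T.conv f (T.tilde (P '' B))) := by
  obtain ⟨hflc, hfe, hfc⟩ := hf
  rcases isEmpty_or_nonempty G with hG | hG
  · haveI : IsEmpty S := ⟨fun σ => hG.false (T.q σ)⟩
    refine ⟨?_, fun t σ => isEmptyElim σ, ?_⟩
    · rw [IsLocallyConstant.iff_exists_open]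
      exact fun σ => isEmptyElim σ
    · have hsupp : Function.support (T.conv f (T.tilde (P '' B))) = ∅ := by
        ext σ; exact isEmptyElim σ
      rw [hsupp, Set.image_empty]
      exact isCompact_empty
  set φ₀ : G → G := Function.invFunOn 𝒢.src B with hφ₀def
  have hφmem : ∀ x ∈ 𝒢.src '' B, φ₀ x ∈ B := by
    rintro x ⟨β, hβ, rfl⟩; exact Function.invFunOn_mem ⟨β, hβ, rfl⟩
  have hφeq : ∀ x ∈ 𝒢.src '' B, 𝒢.src (φ₀ x) = x := by
    rintro x ⟨β, hβ, rfl⟩; exact Function.invFunOn_eq ⟨β, hβ, rfl⟩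
  have hφcont : ContinuousOn φ₀ (𝒢.src '' B) :=
    invFunOn_continuousOn 𝒢.continuous_src hS.compact hS.injSrc
  set E : Set S := (fun σ => 𝒢.src (T.q σ)) ⁻¹' (𝒢.src '' B) with hEdef
  have hsrcBopen : IsOpen (𝒢.src '' B) := 𝒢.isLocalHomeomorph_src.isOpenMap _ hS.isOpen
  have hsrcBclosed : IsClosed (𝒢.src '' B) := (hS.compact.image 𝒢.continuous_src).isClosed
  have hcsq : Continuous fun σ => 𝒢.src (T.q σ) := 𝒢.continuous_src.comp T.continuous_q
  have hEopen : IsOpen E := hsrcBopen.preimage hcsq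
  have hEclosed : IsClosed E := hsrcBclosed.preimage hcsq
  have hval : ∀ σ ∈ E, T.conv f (T.tilde (P '' B)) σ
      = f (𝒮.mul σ (𝒮.inv (P (φ₀ (𝒢.src (T.q σ)))))) := fun σ hσ =>
    conv_right_eq T hS hfe σ (hφmem _ hσ) (hφeq _ hσ)
  have hval0 : ∀ σ ∉ E, T.conv f (T.tilde (P '' B)) σ = 0 := by
    intro σ hσ
    exact conv_right_zero T hS f σ (fun β' hβ' hcontra => hσ ⟨β', hβ', hcontra⟩)
  have hm : ContinuousOn (fun σ => 𝒮.mul σ (𝒮.inv (P (φ₀ (𝒢.src (T.q σ)))))) E := by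
    have c1 : ContinuousOn (fun σ => φ₀ (𝒢.src (T.q σ))) E :=
      hφcont.comp hcsq.continuousOn (fun σ hσ => hσ)
    have c2 : ContinuousOn (fun σ => P (φ₀ (𝒢.src (T.q σ)))) E :=
      hS.contP.comp c1 (fun σ hσ => hφmem _ hσ)
    have c3 : ContinuousOn (fun σ => 𝒮.inv (P (φ₀ (𝒢.src (T.q σ))))) E :=
      𝒮.continuous_inv.comp_continuousOn c2
    have c4 : ContinuousOn (fun σ => (σ, 𝒮.inv (P (φ₀ (𝒢.src (T.q σ)))))) E :=
      continuousOn_id.prodMk c3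
    refine 𝒮.continuousOn_mul.comp c4 ?_
    intro σ hσ
    show 𝒮.src σ = 𝒮.rng (𝒮.inv (P (φ₀ (𝒢.src (T.q σ)))))
    rw [𝒮.rng_inv, src_eq_i T σ, src_eq_i T (P _), hS.qsec _ (hφmem _ hσ), hφeq _ hσ]
  refine memA_of T ?_ (conv_equivariant T (tilde_equivariant T hS))
    (𝒢.isCompact_setMul hfc hS.compact) ?_
  · rw [IsLocallyConstant.iff_exists_open]
    intro σ
    by_cases hσE : σ ∈ E
    · have hN : IsOpen {τ : S | f τ = f (𝒮.mul σ (𝒮.inv (P (φ₀ (𝒢.src (T.q σ))))))} :=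
        hflc.isOpen_fiber _
      have hc := hm σ hσE (hN.mem_nhds (by show f _ = f _; rfl))
      rw [Filter.mem_map, mem_nhdsWithin] at hc
      obtain ⟨O, hOopen, hσO, hOsub⟩ := hc
      refine ⟨O ∩ E, hOopen.inter hEopen, ⟨hσO, hσE⟩, ?_⟩
      rintro σ' ⟨hσ'O, hσ'E⟩
      rw [hval σ' hσ'E, hval σ hσE]
      exact hOsub ⟨hσ'O, hσ'E⟩
    · refine ⟨Eᶜ, hEclosed.isOpen_compl, hσE, ?_⟩
      intro σ' hσ'
      rw [hval0 σ' hσ', hval0 σ hσE]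
  · rintro α ⟨σ, hσ, rfl⟩
    by_cases hσE : σ ∈ E
    · have hβm := hφmem _ hσE
      have hβe := hφeq _ hσE
      have hfτ : f (𝒮.mul σ (𝒮.inv (P (φ₀ (𝒢.src (T.q σ)))))) ≠ 0 := by
        rw [← hval σ hσE]; exact hσ
      have hcompσ : 𝒮.src σ = 𝒮.rng (𝒮.inv (P (φ₀ (𝒢.src (T.q σ))))) := by
        rw [𝒮.rng_inv, src_eq_i T σ, src_eq_i T (P _), hS.qsec _ hβm, hβe]
      have hqτ : T.q (𝒮.mul σ (𝒮.inv (P (φ₀ (𝒢.src (T.q σ))))))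
          = 𝒢.mul (T.q σ) (𝒢.inv (φ₀ (𝒢.src (T.q σ)))) := by
        rw [T.q_mul _ _ hcompσ, T.q_inv, hS.qsec _ hβm]
      have h7 : 𝒢.src (T.q σ) = 𝒢.rng (𝒢.inv (φ₀ (𝒢.src (T.q σ)))) := by
        rw [𝒢.rng_inv, hβe]
      refine ⟨𝒢.mul (T.q σ) (𝒢.inv (φ₀ (𝒢.src (T.q σ)))), ⟨_, hfτ, hqτ⟩,
        φ₀ (𝒢.src (T.q σ)), hβm, ?_, ?_⟩
      · rw [𝒢.src_mul _ _ h7, 𝒢.src_inv]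
      · have h8 := 𝒢.mul_mul_inv (T.q σ) (𝒢.inv (φ₀ (𝒢.src (T.q σ)))) h7
        rw [𝒢.inv_inv] at h8
        exact h8.symm
    · exact absurd (hval0 σ hσE) hσ

lemma memA_conv_left (hS : GoodSlice T B P) {g : S → R} (hg : T.MemA g) :
    T.MemA (T.conv (T.tilde (P '' B)) g) := by
  obtain ⟨hglc, hge, hgc⟩ := hg
  rcases isEmpty_or_nonempty G with hG | hG
  · haveI : IsEmpty S := ⟨fun σ => hG.false (T.q σ)⟩
    refine ⟨?_, fun t σ => isEmptyElim σ, ?_⟩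
    · rw [IsLocallyConstant.iff_exists_open]
      exact fun σ => isEmptyElim σ
    · have hsupp : Function.support (T.conv (T.tilde (P '' B)) g) = ∅ := by
        ext σ; exact isEmptyElim σ
      rw [hsupp, Set.image_empty]
      exact isCompact_empty
  set ψ₀ : G → G := Function.invFunOn 𝒢.rng B with hψ₀def
  have hψmem : ∀ x ∈ 𝒢.rng '' B, ψ₀ x ∈ B := by
    rintro x ⟨β, hβ, rfl⟩; exact Function.invFunOn_mem ⟨β, hβ, rfl⟩
  have hψeq : ∀ x ∈ 𝒢.rng '' B, 𝒢.rng (ψ₀ x) = x := by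
    rintro x ⟨β, hβ, rfl⟩; exact Function.invFunOn_eq ⟨β, hβ, rfl⟩
  have hψcont : ContinuousOn ψ₀ (𝒢.rng '' B) :=
    invFunOn_continuousOn 𝒢.continuous_rng hS.compact hS.injRng
  set E : Set S := (fun σ => 𝒢.rng (T.q σ)) ⁻¹' (𝒢.rng '' B) with hEdef
  have hrngBopen : IsOpen (𝒢.rng '' B) := by
    have himg : 𝒢.rng '' B = 𝒢.src '' (𝒢.inv '' B) := by
      ext x
      constructor
      · rintro ⟨b, hb, rfl⟩; exact ⟨𝒢.inv b, ⟨b, hb, rfl⟩, 𝒢.src_inv b⟩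
      · rintro ⟨_, ⟨b, hb, rfl⟩, rfl⟩; exact ⟨b, hb, (𝒢.src_inv b).symm⟩
    rw [himg]
    exact 𝒢.isLocalHomeomorph_src.isOpenMap _ (𝒢.isOpenMap_inv _ hS.isOpen)
  have hrngBclosed : IsClosed (𝒢.rng '' B) := (hS.compact.image 𝒢.continuous_rng).isClosed
  have hcrq : Continuous fun σ => 𝒢.rng (T.q σ) := 𝒢.continuous_rng.comp T.continuous_q
  have hEopen : IsOpen E := hrngBopen.preimage hcrq
  have hEclosed : IsClosed E := hrngBclosed.preimage hcrq
  have hval : ∀ σ ∈ E, T.conv (T.tilde (P '' B)) g σ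
      = g (𝒮.mul (𝒮.inv (P (ψ₀ (𝒢.rng (T.q σ))))) σ) := fun σ hσ =>
    conv_left_eq T hS hge σ (hψmem _ hσ) (hψeq _ hσ)
  have hval0 : ∀ σ ∉ E, T.conv (T.tilde (P '' B)) g σ = 0 := by
    intro σ hσ
    exact conv_left_zero T hS g σ (fun β' hβ' hcontra => hσ ⟨β', hβ', hcontra⟩)
  have hm : ContinuousOn (fun σ => 𝒮.mul (𝒮.inv (P (ψ₀ (𝒢.rng (T.q σ))))) σ) E := by
    have c1 : ContinuousOn (fun σ => ψ₀ (𝒢.rng (T.q σ))) E :=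
      hψcont.comp hcrq.continuousOn (fun σ hσ => hσ)
    have c2 : ContinuousOn (fun σ => P (ψ₀ (𝒢.rng (T.q σ)))) E :=
      hS.contP.comp c1 (fun σ hσ => hψmem _ hσ)
    have c3 : ContinuousOn (fun σ => 𝒮.inv (P (ψ₀ (𝒢.rng (T.q σ))))) E :=
      𝒮.continuous_inv.comp_continuousOn c2
    have c4 : ContinuousOn (fun σ => (𝒮.inv (P (ψ₀ (𝒢.rng (T.q σ)))), σ)) E :=
      c3.prodMk continuousOn_id
    refine 𝒮.continuousOn_mul.comp c4 ?_
    intro σ hσ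
    show 𝒮.src (𝒮.inv (P (ψ₀ (𝒢.rng (T.q σ))))) = 𝒮.rng σ
    rw [𝒮.src_inv, rng_eq_i T (P _), hS.qsec _ (hψmem _ hσ), hψeq _ hσ, ← rng_eq_i T σ]
  refine memA_of T ?_ (conv_equivariant T hge)
    (𝒢.isCompact_setMul hS.compact hgc) ?_
  · rw [IsLocallyConstant.iff_exists_open]
    intro σ
    by_cases hσE : σ ∈ E
    · have hN : IsOpen {τ : S | g τ = g (𝒮.mul (𝒮.inv (P (ψ₀ (𝒢.rng (T.q σ))))) σ)} :=
        hglc.isOpen_fiber _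
      have hc := hm σ hσE (hN.mem_nhds (by show g _ = g _; rfl))
      rw [Filter.mem_map, mem_nhdsWithin] at hc
      obtain ⟨O, hOopen, hσO, hOsub⟩ := hc
      refine ⟨O ∩ E, hOopen.inter hEopen, ⟨hσO, hσE⟩, ?_⟩
      rintro σ' ⟨hσ'O, hσ'E⟩
      rw [hval σ' hσ'E, hval σ hσE]
      exact hOsub ⟨hσ'O, hσ'E⟩
    · refine ⟨Eᶜ, hEclosed.isOpen_compl, hσE, ?_⟩
      intro σ' hσ'
      rw [hval0 σ' hσ', hval0 σ hσE]
  · rintro α ⟨σ, hσ, rfl⟩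
    by_cases hσE : σ ∈ E
    · have hβm := hψmem _ hσE
      have hβe := hψeq _ hσE
      have hgτ : g (𝒮.mul (𝒮.inv (P (ψ₀ (𝒢.rng (T.q σ))))) σ) ≠ 0 := by
        rw [← hval σ hσE]; exact hσ
      have hcompσ : 𝒮.src (𝒮.inv (P (ψ₀ (𝒢.rng (T.q σ))))) = 𝒮.rng σ := by
        rw [𝒮.src_inv, rng_eq_i T (P _), hS.qsec _ hβm, hβe, ← rng_eq_i T σ]
      have hqτ : T.q (𝒮.mul (𝒮.inv (P (ψ₀ (𝒢.rng (T.q σ))))) σ)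
          = 𝒢.mul (𝒢.inv (ψ₀ (𝒢.rng (T.q σ)))) (T.q σ) := by
        rw [T.q_mul _ _ hcompσ, T.q_inv, hS.qsec _ hβm]
      have h7 : 𝒢.src (𝒢.inv (ψ₀ (𝒢.rng (T.q σ)))) = 𝒢.rng (T.q σ) := by
        rw [𝒢.src_inv, hβe]
      refine ⟨ψ₀ (𝒢.rng (T.q σ)), hβm,
        𝒢.mul (𝒢.inv (ψ₀ (𝒢.rng (T.q σ)))) (T.q σ), ⟨_, hgτ, hqτ⟩, ?_, ?_⟩
      · rw [𝒢.rng_mul _ _ h7, 𝒢.rng_inv]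
      · have h8 := 𝒢.mul_inv_mul (𝒢.inv (ψ₀ (𝒢.rng (T.q σ)))) (T.q σ) h7
        rw [𝒢.inv_inv] at h8
        exact h8.symm
    · exact absurd (hval0 σ hσE) hσ

end DiscreteTwist

end AuxConv

section AuxEff

variable {G : Type u} [TopologicalSpace G] [T2Space G]

lemma grading_unit (𝒢 : EtaleGroupoid G) {Γ : Type*} [Group Γ] {cG : G → Γ}
    (hgr : ∀ a b, 𝒢.src a = 𝒢.rng b → cG (𝒢.mul a b) = cG a * cG b)
    {u : G} (hu : u ∈ 𝒢.unitSpace) : cG u = 1 := by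
  have hme : 𝒢.mul u u = u := by
    have h := 𝒢.rng_mul_self u
    rwa [𝒢.rng_unit hu] at h
  have h2 := hgr u u (by rw [𝒢.src_unit hu, 𝒢.rng_unit hu])
  rw [hme] at h2
  exact left_eq_mul.1 h2

lemma grading_inv (𝒢 : EtaleGroupoid G) {Γ : Type*} [Group Γ] {cG : G → Γ}
    (hgr : ∀ a b, 𝒢.src a = 𝒢.rng b → cG (𝒢.mul a b) = cG a * cG b)
    (α : G) : cG (𝒢.inv α) = (cG α)⁻¹ := by
  have h1 := hgr (𝒢.inv α) α (𝒢.src_inv α)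
  rw [𝒢.inv_mul_self, grading_unit 𝒢 hgr (𝒢.src_mem_unitSpace α)] at h1
  exact eq_inv_of_mul_eq_one_left h1.symm

lemma eff_sub (𝒢 : AmpleGroupoid G) {Γ : Type*} [Group Γ] (cG : G → Γ)
    (heff : interior (𝒢.iso ∩ cG ⁻¹' {1}) = 𝒢.unitSpace)
    {U : Set G} (hUc : IsCompact U) (hUo : IsOpen U) (hUinj : Set.InjOn 𝒢.src U)
    (hUsub : U ⊆ cG ⁻¹' {1}) (hUdisj : ∀ u ∈ U, u ∉ 𝒢.unitSpace)
    {K : Set G} (hK : K ⊆ 𝒢.unitSpace) (hKc : IsCompact K) (hKo : IsOpen K)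
    (hKne : K.Nonempty) :
    ∃ K', K' ⊆ K ∧ IsCompact K' ∧ IsOpen K' ∧ K'.Nonempty ∧
      ∀ α ∈ U, ¬(𝒢.src α ∈ K' ∧ 𝒢.rng α ∈ K') := by
  by_cases hcase : ∃ x ∈ K, x ∉ 𝒢.src '' U
  · obtain ⟨x, hxK, hxns⟩ := hcase
    have hopen : IsOpen (K \ 𝒢.src '' U) :=
      hKo.sdiff (hUc.image 𝒢.continuous_src).isClosed
    obtain ⟨K', hK'cob, hxK', hK'sub⟩ :=
      𝒢.ample.exists_subset_of_mem_open (⟨hxK, hxns⟩ : x ∈ K \ 𝒢.src '' U) hopen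
    exact ⟨K', fun y hy => (hK'sub hy).1, hK'cob.1, hK'cob.2.1, ⟨x, hxK'⟩,
      fun α hα hc => (hK'sub hc.1).2 ⟨α, hα, rfl⟩⟩
  · push_neg at hcase
    have hβ₀ : ∃ β ∈ U, 𝒢.src β ∈ K ∧ 𝒢.rng β ≠ 𝒢.src β := by
      by_contra hcon
      push_neg at hcon
      obtain ⟨x, hxK⟩ := hKne
      obtain ⟨β, hβU, hβx⟩ := hcase x hxK
      have hWopen : IsOpen (U ∩ 𝒢.src ⁻¹' K) := hUo.inter (hKo.preimage 𝒢.continuous_src)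
      have hWsub : U ∩ 𝒢.src ⁻¹' K ⊆ 𝒢.iso ∩ cG ⁻¹' {1} := by
        rintro β' ⟨hβ'U, hβ'K⟩
        exact ⟨hcon β' hβ'U hβ'K, hUsub hβ'U⟩
      have hWunit : U ∩ 𝒢.src ⁻¹' K ⊆ 𝒢.unitSpace := by
        rw [← heff]
        exact interior_maximal hWsub hWopen
      exact hUdisj β hβU (hWunit ⟨hβU, by rw [Set.mem_preimage, hβx]; exact hxK⟩)
    obtain ⟨β₀, hβ₀U, hβ₀K, hβ₀ne⟩ := hβ₀
    obtain ⟨O₂, O₁, hO₂o, hO₁o, hyO₂, hxO₁, hdisj⟩ := t2_separation hβ₀ne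
    have hZc : IsCompact (U \ 𝒢.rng ⁻¹' O₂) := hUc.diff (hO₂o.preimage 𝒢.continuous_rng)
    have hxZ : 𝒢.src β₀ ∉ 𝒢.src '' (U \ 𝒢.rng ⁻¹' O₂) := by
      rintro ⟨β', ⟨hβ'U, hβ'n⟩, hβ'e⟩
      have hββ : β' = β₀ := hUinj hβ'U hβ₀U hβ'e
      exact hβ'n (by rw [Set.mem_preimage, hββ]; exact hyO₂)
    have hopen : IsOpen (K ∩ O₁ ∩ (𝒢.src '' (U \ 𝒢.rng ⁻¹' O₂))ᶜ) :=
      (hKo.inter hO₁o).inter (hZc.image 𝒢.continuous_src).isClosed.isOpen_compl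
    obtain ⟨K', hK'cob, hxK', hK'sub⟩ := 𝒢.ample.exists_subset_of_mem_open
      (⟨⟨hβ₀K, hxO₁⟩, hxZ⟩ : 𝒢.src β₀ ∈ K ∩ O₁ ∩ (𝒢.src '' (U \ 𝒢.rng ⁻¹' O₂))ᶜ) hopen
    refine ⟨K', fun y hy => (hK'sub hy).1.1, hK'cob.1, hK'cob.2.1, ⟨_, hxK'⟩, ?_⟩
    rintro α hαU ⟨hsK', hrK'⟩
    have hαZ : α ∉ U \ 𝒢.rng ⁻¹' O₂ := fun hz => (hK'sub hsK').2 ⟨α, hz, rfl⟩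
    have hrO₂ : 𝒢.rng α ∈ O₂ := by
      by_contra hno
      exact hαZ ⟨hαU, hno⟩
    have hrO₁ : 𝒢.rng α ∈ O₁ := (hK'sub hrK').1.2
    exact (Set.disjoint_left.1 hdisj hrO₂) hrO₁

lemma eff_main (𝒢 : AmpleGroupoid G) {Γ : Type*} [Group Γ] (cG : G → Γ)
    (hcGlc : IsLocallyConstant cG)
    (heff : interior (𝒢.iso ∩ cG ⁻¹' {1}) = 𝒢.unitSpace)
    {C : Set G} (hCc : IsCompact C) (hCsub : C ⊆ cG ⁻¹' {1})
    (hCdisj : ∀ u ∈ C, u ∉ 𝒢.unitSpace)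
    {K : Set G} (hK : K ⊆ 𝒢.unitSpace) (hKc : IsCompact K) (hKo : IsOpen K)
    (hKne : K.Nonempty) :
    ∃ K', K' ⊆ K ∧ IsCompact K' ∧ IsOpen K' ∧ K'.Nonempty ∧
      ∀ α ∈ C, ¬(𝒢.src α ∈ K' ∧ 𝒢.rng α ∈ K') := by
  classical
  have hOopen : IsOpen (cG ⁻¹' {1} \ 𝒢.unitSpace) :=
    (hcGlc {1}).sdiff 𝒢.isClosed_unitSpace
  have hcov : ∀ α ∈ C, ∃ U, (𝒢.toEtaleGroupoid.IsCOB U) ∧ α ∈ U ∧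
      U ⊆ cG ⁻¹' {1} \ 𝒢.unitSpace := by
    intro α hα
    obtain ⟨U, hUcob, hαU, hUsub⟩ := 𝒢.ample.exists_subset_of_mem_open
      (⟨hCsub hα, hCdisj α hα⟩ : α ∈ cG ⁻¹' {1} \ 𝒢.unitSpace) hOopen
    exact ⟨U, hUcob, hαU, hUsub⟩
  choose! Ufn hUcob hUmem hUsub using hcov
  obtain ⟨tfin, htcov⟩ := hCc.elim_finite_subcover (fun α : C => Ufn (α : G))
    (fun α => (hUcob (α : G) α.2).2.1)
    (fun x hx => Set.mem_iUnion.2 ⟨⟨x, hx⟩, hUmem x hx⟩)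
  have hstep : ∀ (t : Finset C) (K0 : Set G), K0 ⊆ 𝒢.unitSpace → IsCompact K0 →
      IsOpen K0 → K0.Nonempty →
      ∃ K', K' ⊆ K0 ∧ IsCompact K' ∧ IsOpen K' ∧ K'.Nonempty ∧
        ∀ i ∈ t, ∀ α ∈ Ufn (i : G), ¬(𝒢.src α ∈ K' ∧ 𝒢.rng α ∈ K') := by
    intro t
    induction t using Finset.induction_on with
    | empty =>
      intro K0 h1 h2 h3 h4
      exact ⟨K0, Set.Subset.rfl, h2, h3, h4, by simp⟩
    | @insert a s ha ih =>
      intro K0 h1 h2 h3 h4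
      obtain ⟨K1, hK1sub, hK1c, hK1o, hK1ne, hK1prop⟩ := ih K0 h1 h2 h3 h4
      have hacob := hUcob (a : G) a.2
      obtain ⟨K2, hK2sub, hK2c, hK2o, hK2ne, hK2prop⟩ := eff_sub 𝒢 cG heff hacob.1
        hacob.2.1 hacob.2.2.1 (fun u hu => (hUsub (a : G) a.2 hu).1)
        (fun u hu => (hUsub (a : G) a.2 hu).2) (hK1sub.trans h1) hK1c hK1o hK1ne
      refine ⟨K2, hK2sub.trans hK1sub, hK2c, hK2o, hK2ne, ?_⟩
      intro i hi α hα
      rcases Finset.mem_insert.1 hi with rfl | his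
      · exact hK2prop α hα
      · intro hc
        exact hK1prop i his α hα ⟨hK2sub hc.1, hK2sub hc.2⟩
  obtain ⟨K', h1, h2, h3, h4, h5⟩ := hstep tfin K hK hKc hKo hKne
  refine ⟨K', h1, h2, h3, h4, ?_⟩
  intro α hα
  obtain ⟨i, hitfin, hmem⟩ := Set.mem_iUnion₂.1 (htcov hα)
  exact h5 i hitfin α hmem

end AuxEff

/-- Graded Uniqueness Theorem: for a `Γ`-graded discrete
`R`-twist whose clopen subgroupoid `G_ε = c_G⁻¹(ε)` is effective, a graded ring
homomorphism `π : A_R(G;Σ) → Q` into a `Γ`-graded ring `Q` is injective iff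
`π (r 1̃_K) ≠ 0` for every nonempty compact open `K ⊆ Σ⁽⁰⁾` and every
nonzero `r ∈ R`. -/
theorem stmt_15 {R : Type*} [CommRing R] {G S : Type*}
    [TopologicalSpace G] [TopologicalSpace S] [T2Space G] [T2Space S]
    {𝒢 : AmpleGroupoid G} {𝒮 : EtaleGroupoid S} (T : DiscreteTwist R 𝒢 𝒮)
    {Γ : Type*} [Group Γ]
    (cG : G → Γ) (cS : S → Γ)
    (hcG : 𝒢.IsGrading cG) (hcS : 𝒮.IsGrading cS)
    (hcomm : ∀ σ : S, cS σ = cG (T.q σ))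
    (heff : interior (𝒢.iso ∩ cG ⁻¹' {1}) = 𝒢.unitSpace)
    {Q : Type*} [Ring Q] (gr : Γ → AddSubgroup Q)
    (hgrmul : ∀ γ δ : Γ, ∀ x ∈ gr γ, ∀ y ∈ gr δ, x * y ∈ gr (γ * δ))
    (hindep : ∀ (F : Finset Γ) (x : Γ → Q), (∀ γ ∈ F, x γ ∈ gr γ) →
      (∑ γ ∈ F, x γ) = 0 → ∀ γ ∈ F, x γ = 0)
    (π : (S → R) → Q)
    (hzero : π 0 = 0)
    (hadd : ∀ f g, T.MemA f → T.MemA g → π (f + g) = π f + π g)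
    (hmul : ∀ f g, T.MemA f → T.MemA g → π (T.conv f g) = π f * π g)
    (hgraded : ∀ (γ : Γ) (f : S → R), T.MemA f →
      T.q '' Function.support f ⊆ cG ⁻¹' {γ} → π f ∈ gr γ) :
    Set.InjOn π {f | T.MemA f} ↔
      ∀ K : Set S, K ⊆ 𝒮.unitSpace → K.Nonempty → IsCompact K → IsOpen K →
        ∀ r : R, r ≠ 0 → π (fun σ => r * T.tilde K σ) ≠ 0 := by
  classical
  constructor
  · -- forward direction
    intro hinj K hKsub hKne hKcomp hKopen r hr
    set Pu : G → S := fun x => T.i x 1 with hPudef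
    have hPux : ∀ x, Pu x = T.i x 1 := fun x => rfl
    have hqK : T.q '' K ⊆ 𝒢.unitSpace := by
      rintro _ ⟨σ, hσ, rfl⟩; exact T.q_mem_unit (hKsub hσ)
    have hqKc : IsCompact (T.q '' K) := hKcomp.image T.continuous_q
    have hqKo : IsOpen (T.q '' K) := T.isOpenMap_q _ hKopen
    have hSl : T.GoodSlice (T.q '' K) Pu := T.goodSlice_units hqK hqKc hqKo
    have hKeq : K = Pu '' (T.q '' K) := by
      ext σ
      constructor
      · intro hσ
        exact ⟨T.q σ, ⟨σ, hσ, rfl⟩, T.i_one_eq_self (hKsub hσ)⟩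
      · rintro ⟨_, ⟨σ', hσ', rfl⟩, rfl⟩
        rw [hPux, T.i_one_eq_self (hKsub hσ')]
        exact hσ'
    have hmemA : T.MemA (fun σ => r * T.tilde K σ) := by
      rw [hKeq]
      exact T.memA_smul r (T.tilde_memA hSl)
    intro hπ0
    have h0 : π (fun σ => r * T.tilde K σ) = π (0 : S → R) := by rw [hπ0, hzero]
    have heq := hinj hmemA (T.memA_zero) h0
    obtain ⟨σ₀, hσ₀⟩ := hKne
    have hval : r * T.tilde K σ₀ = 0 := congrFun heq σ₀
    have htv : T.tilde K σ₀ = 1 := by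
      have h1 : σ₀ = T.act 1 (Pu (T.q σ₀)) := by
        rw [hPux, T.act_i (T.q_mem_unit (hKsub hσ₀)), mul_one,
          T.i_one_eq_self (hKsub hσ₀)]
      rw [hKeq, h1]
      have h2 := T.tilde_val hSl (show T.q σ₀ ∈ T.q '' K from ⟨σ₀, hσ₀, rfl⟩) 1
      rw [h2]
      simp
    rw [htv, mul_one] at hval
    exact hr hval
  · -- backward direction
    intro hrhs
    have hπfin : ∀ (s : Finset Γ) (Fn : Γ → S → R), (∀ γ ∈ s, T.MemA (Fn γ)) →
        π (fun σ => ∑ γ ∈ s, Fn γ σ) = ∑ γ ∈ s, π (Fn γ) := by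
      intro s
      induction s using Finset.induction_on with
      | empty =>
        intro Fn h'
        have hz : (fun σ : S => ∑ γ ∈ (∅ : Finset Γ), Fn γ σ) = (0 : S → R) := by
          funext σ; simp
        rw [hz, hzero, Finset.sum_empty]
      | @insert a s ha ih =>
        intro Fn h'
        have hsplit : (fun σ : S => ∑ γ ∈ insert a s, Fn γ σ)
            = Fn a + fun σ => ∑ γ ∈ s, Fn γ σ := by
          funext σ; rw [Finset.sum_insert ha]; rfl
        rw [hsplit, hadd _ _ (h' a (Finset.mem_insert_self a s))
          (T.memA_finsetSum s Fn fun γ hγ' => h' γ (Finset.mem_insert_of_mem hγ')),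
          ih Fn fun γ hγ' => h' γ (Finset.mem_insert_of_mem hγ'), Finset.sum_insert ha]
    have key : ∀ h : S → R, T.MemA h → π h = 0 → h = 0 := by
      intro h hmemA hπh
      by_contra hne
      have hex : ∃ σ₀, h σ₀ ≠ 0 := by
        by_contra hc
        push_neg at hc
        exact hne (funext fun σ => hc σ)
      obtain ⟨σ₀, hσ₀⟩ := hex
      obtain ⟨hhlc, hheq, hhc⟩ := id hmemA
      obtain ⟨F, hF⟩ := hhc.elim_finite_subcover (fun γ : Γ => cG ⁻¹' {γ})
        (fun γ => hcG.1 {γ}) (fun x _ => Set.mem_iUnion.2 ⟨cG x, rfl⟩)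
      set hom : Γ → S → R := fun γ σ => if cS σ = γ then h σ else 0 with homdef
      have homval : ∀ γ σ, hom γ σ = if cS σ = γ then h σ else 0 := fun γ σ => rfl
      have hommemA : ∀ γ, T.MemA (hom γ) := by
        intro γ
        refine T.memA_of (locConst_comb hcS.1 hhlc fun c x => if c = γ then x else 0)
          ?_ hhc ?_
        · intro t σ
          have hcSa : cS (T.act t σ) = cS σ := by rw [hcomm, hcomm, T.q_act]
          rw [homval, homval, hcSa, hheq t σ]
          by_cases hcs : cS σ = γ
          · rw [if_pos hcs, if_pos hcs]
          · rw [if_neg hcs, if_neg hcs, mul_zero]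
        · rintro α ⟨σ, hσ, rfl⟩
          refine ⟨σ, ?_, rfl⟩
          intro h0
          apply hσ
          rw [homval, h0]
          simp
      have homsupp : ∀ γ, T.q '' Function.support (hom γ) ⊆ cG ⁻¹' {γ} := by
        rintro γ x ⟨σ, hσ, rfl⟩
        have hcs : cS σ = γ := by
          by_contra hcs
          exact hσ (by rw [homval, if_neg hcs])
        show cG (T.q σ) ∈ ({γ} : Set Γ)
        rw [Set.mem_singleton_iff, ← hcomm, hcs]
      have hdecomp : h = fun σ => ∑ γ ∈ F, hom γ σ := by
        funext σ
        by_cases hs : h σ = 0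
        · rw [hs]
          symm
          apply Finset.sum_eq_zero
          intro γ hγ'
          rw [homval]
          by_cases hcs : cS σ = γ
          · rw [if_pos hcs, hs]
          · rw [if_neg hcs]
        · have hmem : cS σ ∈ F := by
            obtain ⟨γ, hγF, hγm⟩ := Set.mem_iUnion₂.1 (hF ⟨σ, hs, rfl⟩)
            have hcg : cG (T.q σ) = γ := hγm
            rw [hcomm, hcg]; exact hγF
          have hsum : ∑ γ ∈ F, hom γ σ = if cS σ ∈ F then h σ else 0 := by
            simp only [homval]
            rw [Finset.sum_ite_eq]
          rw [hsum, if_pos hmem]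
      have hπcomp : ∀ γ ∈ F, π (hom γ) = 0 := by
        apply hindep F (fun γ => π (hom γ))
          (fun γ _ => hgraded γ (hom γ) (hommemA γ) (homsupp γ))
        rw [← hπfin F hom fun γ _ => hommemA γ, ← hdecomp]
        exact hπh
      set γ₀ := cS σ₀ with hγ₀def
      have hpσ₀ : hom γ₀ σ₀ = h σ₀ := by rw [homval, if_pos rfl]
      have hpne : hom γ₀ σ₀ ≠ 0 := by rw [hpσ₀]; exact hσ₀
      have hγ₀F : γ₀ ∈ F := by
        obtain ⟨γ, hγF, hγm⟩ := Set.mem_iUnion₂.1 (hF ⟨σ₀, hσ₀, rfl⟩)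
        have hcg : cG (T.q σ₀) = γ := hγm
        rw [hγ₀def, hcomm, hcg]; exact hγF
      have hπp : π (hom γ₀) = 0 := hπcomp γ₀ hγ₀F
      have hpmemA := hommemA γ₀
      have hpsupp := homsupp γ₀
      obtain ⟨hplc, hpe, hpc⟩ := id hpmemA
      have hα₀mem : T.q σ₀ ∈ cG ⁻¹' {γ₀} := by
        show cG (T.q σ₀) ∈ ({γ₀} : Set Γ)
        rw [Set.mem_singleton_iff, ← hcomm]
      obtain ⟨B'', P, hSl, hα₀B, hBsub⟩ :=
        T.exists_goodSlice (T.q σ₀) (hcG.1 {γ₀}) hα₀mem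
      set Pinv : G → S := fun β => 𝒮.inv (P (𝒢.inv β)) with hPinvdef
      have hPinvx : ∀ β, Pinv β = 𝒮.inv (P (𝒢.inv β)) := fun β => rfl
      have hSlinv : T.GoodSlice (𝒢.inv '' B'') Pinv := hSl.inv
      set w := T.conv (hom γ₀) (T.tilde (Pinv '' (𝒢.inv '' B''))) with hwdef
      have hwmemA : T.MemA w := T.memA_conv_right hSlinv hpmemA
      obtain ⟨hwlc, hwe, hwc⟩ := id hwmemA
      have hπw : π w = 0 := by
        rw [hwdef, hmul _ _ hpmemA (T.tilde_memA hSlinv), hπp, zero_mul]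
      have hdeg : T.q '' Function.support w ⊆ cG ⁻¹' {1} := by
        rintro _ ⟨σ, hσ, rfl⟩
        have hexβ : ∃ β' ∈ 𝒢.inv '' B'', 𝒢.src β' = 𝒢.src (T.q σ) := by
          by_contra hno
          push_neg at hno
          exact hσ (T.conv_right_zero hSlinv (hom γ₀) σ hno)
        obtain ⟨β', hβ'mem, hβ'src⟩ := hexβ
        have hval : w σ = hom γ₀ (𝒮.mul σ (𝒮.inv (Pinv β'))) :=
          T.conv_right_eq hSlinv hpe σ hβ'mem hβ'src
        have hτne : hom γ₀ (𝒮.mul σ (𝒮.inv (Pinv β'))) ≠ 0 := by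
          rw [← hval]; exact hσ
        have hco : 𝒮.src σ = 𝒮.rng (𝒮.inv (Pinv β')) := by
          rw [𝒮.rng_inv, T.src_eq_i σ, T.src_eq_i (Pinv β'),
            hSlinv.qsec β' hβ'mem, hβ'src]
        have hcomp2 : 𝒮.src (𝒮.mul σ (𝒮.inv (Pinv β'))) = 𝒮.rng (Pinv β') := by
          rw [𝒮.src_mul _ _ hco, 𝒮.src_inv]
        have hqeq : T.q σ = 𝒢.mul (T.q (𝒮.mul σ (𝒮.inv (Pinv β')))) β' := by
          have h8 := 𝒮.mul_inv_mul_self σ (Pinv β') hco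
          have h9 : T.q (𝒮.mul (𝒮.mul σ (𝒮.inv (Pinv β'))) (Pinv β'))
              = 𝒢.mul (T.q (𝒮.mul σ (𝒮.inv (Pinv β')))) β' := by
            rw [T.q_mul _ _ hcomp2, hSlinv.qsec β' hβ'mem]
          rw [← h9, h8]
        have hGco : 𝒢.src (T.q (𝒮.mul σ (𝒮.inv (Pinv β')))) = 𝒢.rng β' := by
          rw [← T.q_src, hcomp2, T.q_rng, hSlinv.qsec β' hβ'mem]
        have h9 : cG (T.q (𝒮.mul σ (𝒮.inv (Pinv β')))) = γ₀ := hpsupp ⟨_, hτne, rfl⟩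
        obtain ⟨b, hb, rfl⟩ := hβ'mem
        have hcb : cG b = γ₀ := hBsub hb
        have hcβ' : cG (𝒢.inv b) = γ₀⁻¹ := by
          rw [grading_inv 𝒢.toEtaleGroupoid hcG.2 b, hcb]
        show cG (T.q σ) ∈ ({1} : Set Γ)
        rw [Set.mem_singleton_iff, hqeq, hcG.2 _ _ hGco, h9, hcβ', mul_inv_cancel]
      have hymem : 𝒢.rng (T.q σ₀) ∈ 𝒢.unitSpace := 𝒢.rng_mem_unitSpace _
      have hβinv : 𝒢.inv (T.q σ₀) ∈ 𝒢.inv '' B'' := ⟨_, hα₀B, rfl⟩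
      have hqiy : T.q (T.i (𝒢.rng (T.q σ₀)) 1) = 𝒢.rng (T.q σ₀) := T.q_i hymem 1
      have hsrcβ : 𝒢.src (𝒢.inv (T.q σ₀)) = 𝒢.src (T.q (T.i (𝒢.rng (T.q σ₀)) 1)) := by
        rw [hqiy, 𝒢.src_inv, 𝒢.src_unit hymem]
      have hwiy : w (T.i (𝒢.rng (T.q σ₀)) 1) = hom γ₀ (P (T.q σ₀)) := by
        have hv : w (T.i (𝒢.rng (T.q σ₀)) 1) = hom γ₀
            (𝒮.mul (T.i (𝒢.rng (T.q σ₀)) 1) (𝒮.inv (Pinv (𝒢.inv (T.q σ₀))))) :=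
          T.conv_right_eq hSlinv hpe (T.i (𝒢.rng (T.q σ₀)) 1) hβinv hsrcβ
        rw [hv]
        have hPinveq : 𝒮.inv (Pinv (𝒢.inv (T.q σ₀))) = P (T.q σ₀) := by
          rw [hPinvx, 𝒢.inv_inv, 𝒮.inv_inv]
        rw [hPinveq]
        have hry : T.i (𝒢.rng (T.q σ₀)) 1 = 𝒮.rng (P (T.q σ₀)) := by
          rw [T.rng_eq_i (P (T.q σ₀)), hSl.qsec _ hα₀B]
        rw [hry, 𝒮.rng_mul_self]
      have hpP : hom γ₀ (P (T.q σ₀)) ≠ 0 := by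
        obtain ⟨u, hu⟩ := T.orbit ((hSl.qsec _ hα₀B).symm : T.q σ₀ = T.q (P (T.q σ₀)))
        intro h0
        apply hpne
        rw [hu, hpe u _, h0, mul_zero]
      have hrne0 : w (T.i (𝒢.rng (T.q σ₀)) 1) ≠ 0 := by rw [hwiy]; exact hpP
      set r := w (T.i (𝒢.rng (T.q σ₀)) 1) with hrdef
      have hrne : r ≠ 0 := hrne0
      have hNopen : IsOpen {τ : S | w τ = r} := hwlc.isOpen_fiber r
      have hNmem : T.i (𝒢.rng (T.q σ₀)) 1 ∈ {τ : S | w τ = r} := hrdef.symm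
      have hcwa := (T.continuousOn_i 1) _ hymem (hNopen.mem_nhds hNmem)
      rw [Filter.mem_map, mem_nhdsWithin] at hcwa
      obtain ⟨O, hOo, hyO, hOsub⟩ := hcwa
      obtain ⟨K, hKcob, hyK, hKsub2⟩ := 𝒢.ample.exists_subset_of_mem_open
        (⟨hyO, hymem⟩ : 𝒢.rng (T.q σ₀) ∈ O ∩ 𝒢.unitSpace) (hOo.inter 𝒢.isOpen_unitSpace)
      have hKunit : K ⊆ 𝒢.unitSpace := fun x hx => (hKsub2 hx).2
      have hKval : ∀ x ∈ K, w (T.i x 1) = r :=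
        fun x hx => hOsub ⟨(hKsub2 hx).1, (hKsub2 hx).2⟩
      have hCc : IsCompact (T.q '' Function.support w \ 𝒢.unitSpace) := by
        rw [Set.diff_eq]
        exact hwc.inter_right 𝒢.isOpen_unitSpace.isClosed_compl
      obtain ⟨Ks, hKs_sub, hKs_c, hKs_o, hKs_ne, hKs_prop⟩ := eff_main 𝒢 cG hcG.1 heff
        hCc (fun α hα => hdeg hα.1) (fun u hu => hu.2) hKunit hKcob.1 hKcob.2.1 ⟨_, hyK⟩
      have hKsunit : Ks ⊆ 𝒢.unitSpace := hKs_sub.trans hKunit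
      set Pu : G → S := fun x => T.i x 1 with hPudef
      have hPux : ∀ x, Pu x = T.i x 1 := fun x => rfl
      have hSlu : T.GoodSlice Ks Pu := T.goodSlice_units hKsunit hKs_c hKs_o
      have hinvPu : ∀ x ∈ 𝒢.unitSpace, 𝒮.inv (Pu x) = Pu x := by
        intro x hx
        rw [hPux, T.inv_i hx, inv_one]
      set g₁ := T.conv w (T.tilde (Pu '' Ks)) with hg₁def
      have hg₁memA : T.MemA g₁ := T.memA_conv_right hSlu hwmemA
      have hg₁e : ∀ (t : Rˣ) (σ : S), g₁ (T.act t σ) = ((t⁻¹ : Rˣ) : R) * g₁ σ :=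
        fun t σ => T.conv_equivariant (T.tilde_equivariant hSlu) t σ
      have hfinal : T.conv (T.tilde (Pu '' Ks)) g₁ = fun σ => r * T.tilde (Pu '' Ks) σ := by
        funext σ
        by_cases hrng : 𝒢.rng (T.q σ) ∈ Ks
        · have h1 : T.conv (T.tilde (Pu '' Ks)) g₁ σ
              = g₁ (𝒮.mul (𝒮.inv (Pu (𝒢.rng (T.q σ)))) σ) :=
            T.conv_left_eq hSlu hg₁e σ hrng (𝒢.rng_unit (hKsunit hrng))
          have h2 : 𝒮.mul (𝒮.inv (Pu (𝒢.rng (T.q σ)))) σ = σ := by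
            rw [hinvPu _ (hKsunit hrng), hPux, ← T.rng_eq_i σ, 𝒮.rng_mul_self]
          rw [h1, h2]
          by_cases hsrc : 𝒢.src (T.q σ) ∈ Ks
          · have h3 : g₁ σ = w (𝒮.mul σ (𝒮.inv (Pu (𝒢.src (T.q σ))))) :=
              T.conv_right_eq hSlu hwe σ hsrc (𝒢.src_unit (hKsunit hsrc))
            have h4 : 𝒮.mul σ (𝒮.inv (Pu (𝒢.src (T.q σ)))) = σ := by
              rw [hinvPu _ (hKsunit hsrc), hPux, ← T.src_eq_i σ, 𝒮.mul_src_self]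
            rw [h3, h4]
            by_cases hunit : T.q σ ∈ 𝒢.unitSpace
            · have hqσKs : T.q σ ∈ Ks := by
                rw [← 𝒢.src_unit hunit]; exact hsrc
              have hmemσ : σ ∈ T.q ⁻¹' {T.q σ} := rfl
              rw [T.exact' _ hunit] at hmemσ
              obtain ⟨t, ht⟩ := hmemσ
              have hσact : σ = T.act t (Pu (T.q σ)) := by
                rw [hPux, T.act_i hunit, mul_one]; exact ht
              have hwσ : w σ = ((t⁻¹ : Rˣ) : R) * r := by
                conv_lhs => rw [hσact]
                rw [hwe t (Pu (T.q σ)), hPux, hKval _ (hKs_sub hqσKs)]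
              have htil : T.tilde (Pu '' Ks) σ = ((t⁻¹ : Rˣ) : R) := by
                conv_lhs => rw [hσact]
                exact T.tilde_val hSlu hqσKs t
              rw [hwσ, htil, mul_comm]
            · have hwσ : w σ = 0 := by
                by_contra hwne
                exact hKs_prop (T.q σ) ⟨⟨σ, hwne, rfl⟩, hunit⟩ ⟨hsrc, hrng⟩
              have htil : T.tilde (Pu '' Ks) σ = 0 :=
                T.tilde_zero hSlu (fun hc => hunit (hKsunit hc))
              rw [hwσ, htil, mul_zero]
          · have hg₁σ : g₁ σ = 0 := by
              refine T.conv_right_zero hSlu w σ ?_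
              intro β hβ hc
              apply hsrc
              rw [← hc, 𝒢.src_unit (hKsunit hβ)]
              exact hβ
            have htil : T.tilde (Pu '' Ks) σ = 0 := by
              refine T.tilde_zero hSlu ?_
              intro hc
              apply hsrc
              rw [𝒢.src_unit (hKsunit hc)]
              exact hc
            rw [hg₁σ, htil, mul_zero]
        · have hLz : T.conv (T.tilde (Pu '' Ks)) g₁ σ = 0 := by
            refine T.conv_left_zero hSlu g₁ σ ?_
            intro β hβ hc
            apply hrng
            rw [← hc, 𝒢.rng_unit (hKsunit hβ)]
            exact hβ
          have htil : T.tilde (Pu '' Ks) σ = 0 := by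
            refine T.tilde_zero hSlu ?_
            intro hc
            apply hrng
            rw [𝒢.rng_unit (hKsunit hc)]
            exact hc
          rw [hLz, htil, mul_zero]
      have hπg₂ : π (T.conv (T.tilde (Pu '' Ks)) g₁) = 0 := by
        rw [hmul _ _ (T.tilde_memA hSlu) hg₁memA, hg₁def,
          hmul _ _ hwmemA (T.tilde_memA hSlu), hπw, zero_mul, mul_zero]
      have hKtilsub : Pu '' Ks ⊆ 𝒮.unitSpace := by
        rintro _ ⟨x, hx, rfl⟩
        rw [hPux]
        exact T.i_one_mem (hKsunit hx)
      have hKtilne : (Pu '' Ks).Nonempty := hKs_ne.image _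
      have hKtilcomp : IsCompact (Pu '' Ks) :=
        hKs_c.image_of_continuousOn ((T.continuousOn_i 1).mono hKsunit)
      have hKtilopen : IsOpen (Pu '' Ks) := hSlu.openImg
      have hcontra := hrhs (Pu '' Ks) hKtilsub hKtilne hKtilcomp hKtilopen r hrne
      apply hcontra
      rw [← hfinal]
      exact hπg₂
    intro f hf g hg hfg
    have hmemsub : T.MemA (f + -g) := T.memA_add hf (T.memA_neg hg)
    have hπneg : π (-g) = - π g := by
      have h1 := hadd g (-g) hg (T.memA_neg hg)
      have h2 : g + -g = (0 : S → R) := by funext σ; simp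
      rw [h2, hzero] at h1
      exact (neg_eq_of_add_eq_zero_right h1.symm).symm
    have hπ0 : π (f + -g) = 0 := by
      rw [hadd f (-g) hf (T.memA_neg hg), hπneg, hfg]
      simp
    have hzero' := key _ hmemsub hπ0
    funext σ
    have h2 : f σ + -(g σ) = 0 := congrFun hzero' σ
    exact add_neg_eq_zero.1 h2
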